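/- arXiv:1802.07951 — 8 statements merged into one kernel-verified Lean document; each statement's English description precedes it below -/
import Mathlib

section
/- Let L be a finite-dimensional Lie algebra and let ξ ∈ L* be any linear functional. Then the stabilizer L(ξ) = {x ∈ L : ξ([x,y]) = 0 for all y ∈ L} is a Lie subalgebra of L; moreover if ξ is regular (i.e. dim L(ξ) = i(L)), then L(ξ) is abelian. -/
open Module

/-- The stabilizer `L(ξ) = {x ∈ L | ξ ⁅x, y⁆ = 0 for all y}` of a linear functional. -/
def lieStab (k : Type*) [Field k] (L : Type*) [LieRing L] [LieAlgebra k L]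
    (ξ : Module.Dual k L) : Submodule k L where
  carrier := {x | ∀ y, ξ ⁅x, y⁆ = 0}
  add_mem' := by intro a b ha hb y; rw [add_lie, map_add, ha y, hb y, add_zero]
  zero_mem' := by intro y; rw [zero_lie, map_zero]
  smul_mem' := by intro c a ha y; rw [smul_lie, map_smul, ha y, smul_zero]

/-- The index `i(L)`: the minimal dimension of a stabilizer `L(ξ)`, `ξ ∈ L*`. -/
noncomputable def lieIndex (k : Type*) [Field k] (L : Type*) [LieRing L] [LieAlgebra k L] : ℕ :=
  sInf (Set.range fun ξ : Module.Dual k L => finrank k (lieStab k L ξ))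

/-- The maximal abelian dimension `α(L)`. -/
noncomputable def maxAbelianDim (k : Type*) [Field k] (L : Type*) [LieRing L]
    [LieAlgebra k L] : ℕ :=
  sSup {d : ℕ | ∃ H : LieSubalgebra k L, IsLieAbelian H ∧ finrank k H = d}

/-- The magic number `c(L) = (dim L + i(L))/2`. -/
noncomputable def magic (k : Type*) [Field k] (L : Type*) [LieRing L] [LieAlgebra k L] : ℕ :=
  (finrank k L + lieIndex k L) / 2


section KeyLemma

open Polynomial

variable {k V W : Type*} [Field k] [Infinite k]
  [AddCommGroup V] [Module k V] [FiniteDimensional k V]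
  [AddCommGroup W] [Module k W] [FiniteDimensional k W]

theorem key_rank_lemma (A B : V →ₗ[k] W)
    (h : ∀ t : k, finrank k (LinearMap.range (A + t • B)) ≤ finrank k (LinearMap.range A))
    {a : V} (ha : A a = 0) : B a ∈ LinearMap.range A := by
  by_contra hBa
  set r := finrank k (LinearMap.range A) with hr
  obtain ⟨b⟩ : Nonempty (Basis (Fin r) k (LinearMap.range A)) := ⟨Module.finBasis k _⟩
  choose v hv using fun i => LinearMap.mem_range.mp (b i).2
  -- the span of the (b i : W) is range A
  have hspan : Submodule.span k (Set.range fun i => ((b i : W))) = LinearMap.range A := by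
    have h1 : Set.range (fun i => ((b i : W))) = (LinearMap.range A).subtype '' Set.range b := by
      rw [← Set.range_comp]; rfl
    rw [h1, ← Submodule.map_span, b.span_eq, Submodule.map_top, Submodule.range_subtype]
  set u : Fin (r + 1) → W := Fin.snoc (fun i => ((b i : W))) (B a) with hu_def
  have hbi : LinearIndependent k (fun i => ((b i : W))) :=
    b.linearIndependent.map' (LinearMap.range A).subtype (Submodule.ker_subtype _)
  have hu : LinearIndependent k u :=
    linearIndependent_fin_snoc.mpr ⟨hbi, by rw [hspan]; exact hBa⟩
  -- dual family
  set S := Submodule.span k (Set.range u) with hS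
  obtain ⟨T, hT⟩ := Submodule.exists_isCompl S
  set bS : Basis (Fin (r + 1)) k S := Basis.span hu with hbS
  set w : Fin (r + 1) → Module.Dual k W :=
    fun j => (bS.coord j).comp (Submodule.linearProjOfIsCompl S T hT) with hw_def
  have hw : ∀ i j, w j (u i) = if i = j then 1 else 0 := by
    intro i j
    have h1 : (Submodule.linearProjOfIsCompl S T hT) (u i) = bS i := by
      have : ((bS i : W)) = u i := congrArg Subtype.val (Basis.span_apply hu i)
      rw [← this]
      exact Submodule.linearProjOfIsCompl_apply_left hT (bS i)
    simp only [hw_def, LinearMap.comp_apply, h1, Basis.coord_apply, Basis.repr_self]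
    exact Finsupp.single_apply
  -- polynomial matrix
  set G : Matrix (Fin (r + 1)) (Fin (r + 1)) k[X] :=
    Matrix.of (Fin.snoc (fun i j => C (w j (A (v i))) + X * C (w j (B (v i))))
      (fun j => C (w j (B a)))) with hG
  have hGc : ∀ (i : Fin r) j, G (Fin.castSucc i) j
      = C (w j (A (v i))) + X * C (w j (B (v i))) := by
    intro i j
    show (Fin.snoc (fun i j => C (w j (A (v i))) + X * C (w j (B (v i))))
      (fun j => C (w j (B a))) : Fin (r+1) → Fin (r+1) → k[X]) (Fin.castSucc i) j = _
    rw [Fin.snoc_castSucc]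
  have hGl : ∀ j, G (Fin.last r) j = C (w j (B a)) := by
    intro j
    show (Fin.snoc (fun i j => C (w j (A (v i))) + X * C (w j (B (v i))))
      (fun j => C (w j (B a))) : Fin (r+1) → Fin (r+1) → k[X]) (Fin.last r) j = _
    rw [Fin.snoc_last]
  have hG0 : G.map (eval 0) = 1 := by
    ext i j
    refine Fin.lastCases ?_ (fun i' => ?_) i
    · rw [Matrix.map_apply, hGl, eval_C]
      have h2 := hw (Fin.last r) j
      rw [hu_def, Fin.snoc_last] at h2
      rw [h2, Matrix.one_apply]
    · rw [Matrix.map_apply, hGc]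
      simp only [eval_add, eval_C, eval_mul, eval_X, zero_mul, add_zero]
      have h2 := hw (Fin.castSucc i') j
      rw [hu_def, Fin.snoc_castSucc, ← hv i'] at h2
      rw [h2, Matrix.one_apply]
  have hmap : ∀ t : k, (G.map (eval t)).det = eval t G.det := by
    intro t
    have h4 : G.map (eval t) = (evalRingHom t).mapMatrix G := by
      ext i j; simp [Matrix.map_apply]
    rw [h4, ← RingHom.map_det]
    simp
  have hdet : G.det ≠ 0 := by
    intro hd
    have h5 := hmap 0
    rw [hG0, Matrix.det_one, hd, eval_zero] at h5
    exact one_ne_zero h5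
  -- pick t₀ ≠ 0 avoiding the roots
  obtain ⟨t₀, ht₀⟩ : ∃ t₀, t₀ ∉ ({x | IsRoot G.det x} ∪ {0} : Set k) :=
    Set.Infinite.nonempty
      (Set.Finite.infinite_compl ((Polynomial.finite_setOf_isRoot hdet).union
        (Set.finite_singleton 0)))
  have ht₀ne : t₀ ≠ 0 := fun hh => ht₀ (Or.inr hh)
  have ht₀root : eval t₀ G.det ≠ 0 := fun hh => ht₀ (Or.inl hh)
  set Gt : Matrix (Fin (r + 1)) (Fin (r + 1)) k := G.map (eval t₀) with hGt
  have hGtdet : IsUnit Gt := by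
    rw [Matrix.isUnit_iff_isUnit_det, hGt, hmap t₀]
    exact isUnit_iff_ne_zero.mpr ht₀root
  -- the family y
  set y : Fin (r + 1) → W := Fin.snoc (fun i => A (v i) + t₀ • B (v i)) (B a) with hy_def
  have hyw : ∀ i j, w j (y i) = Gt i j := by
    intro i j
    refine Fin.lastCases ?_ (fun i' => ?_) i
    · rw [hy_def]
      rw [show (Fin.snoc (fun i => A (v i) + t₀ • B (v i)) (B a) : Fin (r+1) → W)
        (Fin.last r) = B a from Fin.snoc_last _ _]
      rw [hGt, Matrix.map_apply, hGl, eval_C]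
    · rw [hy_def]
      rw [show (Fin.snoc (fun i => A (v i) + t₀ • B (v i)) (B a) : Fin (r+1) → W)
        (Fin.castSucc i') = A (v i') + t₀ • B (v i') from Fin.snoc_castSucc _ _ _]
      rw [hGt, Matrix.map_apply, hGc]
      rw [map_add, map_smul, eval_add, eval_C, eval_mul, eval_X, eval_C, smul_eq_mul]
  have hy : LinearIndependent k y := by
    rw [Fintype.linearIndependent_iff]
    intro g hg
    have hvm : ∀ j, Matrix.vecMul g Gt j = 0 := by
      intro j
      have h3 := congrArg (w j) hg
      rw [map_sum, map_zero] at h3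
      simp only [map_smul, smul_eq_mul, hyw] at h3
      simpa [Matrix.vecMul, dotProduct] using h3
    have hginj := Matrix.vecMul_injective_iff_isUnit.mpr hGtdet
    have heq : Matrix.vecMul g Gt = Matrix.vecMul 0 Gt := by
      funext j; rw [hvm j, Matrix.zero_vecMul]; simp
    intro i
    have h6 := hginj heq
    rw [h6]; simp
  -- span of y has dim r+1 and lies in range (A + t₀ • B)
  have hsple : Submodule.span k (Set.range y) ≤ LinearMap.range (A + t₀ • B) := by
    rw [Submodule.span_le]
    rintro _ ⟨i, rfl⟩
    refine Fin.lastCases ?_ (fun i' => ?_) i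
    · rw [hy_def, Fin.snoc_last]
      refine ⟨t₀⁻¹ • a, ?_⟩
      simp [ha, smul_smul, inv_mul_cancel₀ ht₀ne]
    · rw [hy_def, Fin.snoc_castSucc]
      exact ⟨v i', by simp⟩
  have hfr : finrank k (Submodule.span k (Set.range y)) = r + 1 := by
    rw [finrank_span_eq_card hy, Fintype.card_fin]
  have := Submodule.finrank_mono hsple
  rw [hfr] at this
  have := h t₀
  omega

end KeyLemma

section Glue

variable (k : Type*) [Field k] (L : Type*) [LieRing L] [LieAlgebra k L]

/-- The map `x ↦ (y ↦ ξ ⁅x, y⁆)`. -/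
def lieStabMap (ξ : Module.Dual k L) : L →ₗ[k] Module.Dual k L where
  toFun x := ξ ∘ₗ (LieAlgebra.ad k L x)
  map_add' x y := by ext z; simp [add_lie]
  map_smul' c x := by ext z; simp [smul_lie]

lemma lieStabMap_apply (ξ : Module.Dual k L) (x y : L) :
    lieStabMap k L ξ x y = ξ ⁅x, y⁆ := rfl

lemma mem_lieStab_iff (ξ : Module.Dual k L) (x : L) :
    x ∈ lieStab k L ξ ↔ ∀ y, ξ ⁅x, y⁆ = 0 := Iff.rfl

lemma ker_lieStabMap (ξ : Module.Dual k L) :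
    LinearMap.ker (lieStabMap k L ξ) = lieStab k L ξ := by
  ext x
  simp only [LinearMap.mem_ker, mem_lieStab_iff]
  constructor
  · intro h y
    rw [← lieStabMap_apply k L ξ x y, h]; rfl
  · intro h
    ext y
    rw [lieStabMap_apply k L ξ x y, h y]; rfl

lemma lieStabMap_add_smul (ξ h : Module.Dual k L) (t : k) :
    lieStabMap k L (ξ + t • h) = lieStabMap k L ξ + t • lieStabMap k L h := by
  ext x y
  simp [lieStabMap_apply]

end Glue

theorem stab_isSubalgebra_and_abelian_of_regular (k : Type*) [Field k] [CharZero k]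
    (L : Type*) [LieRing L] [LieAlgebra k L] [Module.Finite k L]
    (ξ : Module.Dual k L) :
    (∀ x ∈ lieStab k L ξ, ∀ y ∈ lieStab k L ξ, ⁅x, y⁆ ∈ lieStab k L ξ) ∧
    (finrank k (lieStab k L ξ) = lieIndex k L →
      ∀ x ∈ lieStab k L ξ, ∀ y ∈ lieStab k L ξ, ⁅x, y⁆ = 0) := by
  constructor
  · intro x hx y hy
    have hx' : ∀ w, ξ ⁅x, w⁆ = 0 := hx
    have hy' : ∀ w, ξ ⁅y, w⁆ = 0 := hy
    rw [mem_lieStab_iff]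
    intro z
    rw [lie_lie, map_sub, hx' ⁅y, z⁆, hy' ⁅x, z⁆, sub_zero]
  · intro hreg x hx y hy
    have hx' : ∀ w, ξ ⁅x, w⁆ = 0 := hx
    have hy' : ∀ w, ξ ⁅y, w⁆ = 0 := hy
    have hxk : lieStabMap k L ξ x = 0 := by
      ext z; rw [lieStabMap_apply, hx' z]; rfl
    have hall : ∀ h : Module.Dual k L, h ⁅x, y⁆ = 0 := by
      intro h
      have hrank : ∀ t : k,
          finrank k (LinearMap.range (lieStabMap k L ξ + t • lieStabMap k L h))
          ≤ finrank k (LinearMap.range (lieStabMap k L ξ)) := by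
        intro t
        have e1 := LinearMap.finrank_range_add_finrank_ker (lieStabMap k L ξ)
        have e2 := LinearMap.finrank_range_add_finrank_ker (lieStabMap k L (ξ + t • h))
        rw [ker_lieStabMap] at e1 e2
        have e3 : lieIndex k L ≤ finrank k (lieStab k L (ξ + t • h)) :=
          Nat.sInf_le ⟨ξ + t • h, rfl⟩
        rw [lieStabMap_add_smul] at e2
        omega
      obtain ⟨z, hz⟩ := key_rank_lemma (lieStabMap k L ξ) (lieStabMap k L h) hrank hxk
      have h7 := congrArg (fun f => f y) hz
      simp only [lieStabMap_apply] at h7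
      rw [← h7, show ⁅z, y⁆ = -⁅y, z⁆ from by rw [← lie_skew y z, neg_neg],
        map_neg, hy' z, neg_zero]
    exact (Module.forall_dual_apply_eq_zero_iff k _).mp hall
end

section
/- Let H be a Lie subalgebra of L of codimension one. If H admits a commutative polarization (an abelian subalgebra Q with dim Q = c(H)), then L satisfies Rentschler's property: α(L) ≥ c(L) − 1. -/
open Module

/-- If `H` has codimension one in `L`, then `i(L) ≤ i(H) + 1`. -/
lemma lieIndex_le_of_codim_one (k : Type*) [Field k]
    (L : Type*) [LieRing L] [LieAlgebra k L] [Module.Finite k L]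
    (H : LieSubalgebra k L) (hcodim : finrank k H + 1 = finrank k L) :
    lieIndex k L ≤ lieIndex k H + 1 := by
  -- pick ξ' achieving the index of H
  have hne : (Set.range fun ξ : Module.Dual k H => finrank k (lieStab k H ξ)).Nonempty :=
    ⟨_, ⟨0, rfl⟩⟩
  obtain ⟨ξ', hξ'⟩ := Nat.sInf_mem hne
  -- extend ξ' to L
  obtain ⟨ξ, hext⟩ := LinearMap.exists_extend (p := H.toSubmodule) ξ'
  have hres : ∀ z : H, ξ z = ξ' z := fun z => by
    have := congrFun (congrArg DFunLike.coe hext) z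
    exact this
  have key : finrank k (lieStab k L ξ) ≤ finrank k (lieStab k H ξ') + 1 := by
    set S := lieStab k L ξ
    set S' := lieStab k H ξ'
    have h1 : S ⊓ H.toSubmodule ≤ S'.map H.toSubmodule.subtype := by
      rintro x ⟨hxS, hxH⟩
      refine ⟨⟨x, hxH⟩, ?_, rfl⟩
      intro y
      have : ξ' ⁅(⟨x, hxH⟩ : H), y⁆ = ξ ⁅x, (y : L)⁆ := by
        rw [← hres]; rfl
      rw [this, hxS]
    have h2 : finrank k (S ⊓ H.toSubmodule : Submodule k L) ≤ finrank k S' := by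
      calc finrank k (S ⊓ H.toSubmodule : Submodule k L)
          ≤ finrank k (S'.map H.toSubmodule.subtype) := Submodule.finrank_mono h1
        _ = finrank k S' := Submodule.finrank_map_subtype_eq _ _
    have hH : finrank k H.toSubmodule + 1 = finrank k L := hcodim
    have h3 := Submodule.finrank_sup_add_finrank_inf_eq S H.toSubmodule
    have hle : finrank k (S ⊔ H.toSubmodule : Submodule k L) ≤ finrank k L :=
      Submodule.finrank_le _
    omega
  have h4 : lieIndex k L ≤ finrank k (lieStab k L ξ) := Nat.sInf_le ⟨ξ, rfl⟩
  have h5 : finrank k (lieStab k H ξ') = lieIndex k H := hξ'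
  omega

/-- if a codimension-one subalgebra H of L admits a CP, then L satisfies
Rentschler's property. -/
theorem rentschler_of_subalgebra_CP (k : Type*) [Field k] [CharZero k]
    (L : Type*) [LieRing L] [LieAlgebra k L] [Module.Finite k L]
    (H : LieSubalgebra k L) (hcodim : finrank k H + 1 = finrank k L)
    (hCP : ∃ Q : LieSubalgebra k H, IsLieAbelian Q ∧ finrank k Q = magic k H) :
    magic k L - 1 ≤ maxAbelianDim k L := by
  obtain ⟨Q, hQab, hQdim⟩ := hCP
  -- magic L - 1 ≤ magic H
  have hidx := lieIndex_le_of_codim_one k L H hcodim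
  have hmagic : magic k L ≤ magic k H + 1 := by
    unfold magic
    have : finrank k L + lieIndex k L ≤ finrank k H + lieIndex k H + 2 := by omega
    calc (finrank k L + lieIndex k L) / 2 ≤ (finrank k H + lieIndex k H + 2) / 2 :=
          Nat.div_le_div_right this
      _ = (finrank k H + lieIndex k H) / 2 + 1 := by omega
  -- Q as abelian subalgebra of L
  set Q' : LieSubalgebra k L := Q.map H.incl with hQ'
  have hQ'ab : IsLieAbelian Q' := by
    constructor
    rintro ⟨a, ha⟩ ⟨b, hb⟩
    obtain ⟨x, hx, hxa⟩ := ha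
    obtain ⟨y, hy, hyb⟩ := hb
    have : ⁅a, b⁆ = 0 := by
      subst hxa hyb
      have : ⁅(⟨x, hx⟩ : Q), (⟨y, hy⟩ : Q)⁆ = 0 := trivial_lie_zero _ _ _ _
      have h2 : (⁅x, y⁆ : H) = 0 := congrArg Subtype.val this
      show ⁅H.incl x, H.incl y⁆ = 0
      rw [← LieHom.map_lie, h2, map_zero]
    exact Subtype.ext this
  have hQ'dim : finrank k Q' = finrank k Q := by
    have hinj : Function.Injective H.incl.toLinearMap := fun a b hab => Subtype.val_injective hab
    have heq : Q'.toSubmodule = Q.toSubmodule.map H.incl.toLinearMap := rfl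
    rw [show (finrank k Q' : ℕ) = finrank k Q'.toSubmodule from rfl, heq]
    exact (Submodule.equivMapOfInjective _ hinj _).finrank_eq.symm
  have hmem : magic k H ∈ {d : ℕ | ∃ A : LieSubalgebra k L, IsLieAbelian A ∧ finrank k A = d} :=
    ⟨Q', hQ'ab, by rw [hQ'dim, hQdim]⟩
  have hbdd : BddAbove {d : ℕ | ∃ A : LieSubalgebra k L, IsLieAbelian A ∧ finrank k A = d} := by
    refine ⟨finrank k L, ?_⟩
    rintro d ⟨A, _, rfl⟩
    exact Submodule.finrank_le A.toSubmodule
  have : magic k H ≤ maxAbelianDim k L := le_csSup hbdd hmem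
  omega
end

section
/- With notation as above, given that i(N_n) = ⌊n/2⌋, the abelian ideal P = span{E_{ij} : 1 ≤ i ≤ q, q+1 ≤ j ≤ n} (q = ⌊n/2⌋) satisfies dim P = c(N_n) = (dim N_n + i(N_n))/2, i.e. P is a commutative polarization of N_n, and hence α(N_n) = ⌊n²/4⌋. -/
open Module

attribute [local instance 100] LieRing.ofAssociativeRing

/-- The Lie algebra `N_n` of strictly upper triangular `n × n` matrices, as a Lie
subalgebra of the matrix Lie algebra (with commutator bracket). -/
def strictUpper (k : Type*) [Field k] (n : ℕ) : LieSubalgebra k (Matrix (Fin n) (Fin n) k) where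
  carrier := {M | ∀ i j : Fin n, j ≤ i → M i j = 0}
  add_mem' := by intro A B hA hB i j hij; simp [Matrix.add_apply, hA i j hij, hB i j hij]
  zero_mem' := by intro i j _; simp
  smul_mem' := by intro c A hA i j hij; simp [Matrix.smul_apply, hA i j hij]
  lie_mem' := by
    intro A B hA hB i j hij
    have h : ∀ (C D : Matrix (Fin n) (Fin n) k),
        (∀ i j : Fin n, j ≤ i → C i j = 0) → (∀ i j : Fin n, j ≤ i → D i j = 0) →
        (C * D) i j = 0 := by
      intro C D hC hD
      rw [Matrix.mul_apply]
      refine Finset.sum_eq_zero fun l _ => ?_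
      rcases le_or_gt l i with h' | h'
      · rw [hC i l h', zero_mul]
      · rw [hD l j (hij.trans h'.le), mul_zero]
    have : (⁅A, B⁆ : Matrix (Fin n) (Fin n) k) = A * B - B * A := rfl
    rw [this, Matrix.sub_apply, h A B hA hB, h B A hB hA, sub_zero]

/-! ### Auxiliary machinery -/

section Aux

variable {k : Type*} [Field k]

/-- For any abelian Lie subalgebra `A` of a finite-dimensional Lie algebra `V` and any
functional `ξ`, we have `2 dim A ≤ dim V + dim V(ξ)`. -/
lemma abelian_bound (V : Type*) [LieRing V] [LieAlgebra k V] [FiniteDimensional k V]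
    (ξ : Dual k V) (A : LieSubalgebra k V) (hA : IsLieAbelian A) :
    2 * finrank k A ≤ finrank k V + finrank k (lieStab k V ξ) := by
  classical
  set R : Submodule k V := lieStab k V ξ with hR
  set As : Submodule k V := A.toSubmodule with hAs
  let φ : V →ₗ[k] Dual k V :=
    { toFun := fun x => ξ ∘ₗ (LieAlgebra.ad k V x : V →ₗ[k] V)
      map_add' := by intro x y; ext z; simp [add_lie]
      map_smul' := by intro c x; ext z; simp [smul_lie] }
  have hφ : ∀ x y, φ x y = ξ ⁅x, y⁆ := fun x y => rfl
  have hkerφ : LinearMap.ker φ = R := by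
    ext x
    simp only [LinearMap.mem_ker, hR]
    constructor
    · intro h y
      have := congrArg (fun f => f y) h
      simpa [hφ] using this
    · intro h
      ext y
      simpa [hφ] using h y
  set O : Submodule k V := Submodule.comap φ As.dualAnnihilator with hO
  have hAO : As ≤ O := by
    intro a ha
    simp only [hO, Submodule.mem_comap, Submodule.mem_dualAnnihilator]
    intro a' ha'
    have : (⁅(⟨a, ha⟩ : A), (⟨a', ha'⟩ : A)⁆ : A) = 0 := trivial_lie_zero _ _ _ _
    have h2 : ⁅a, a'⁆ = (0 : V) := by
      calc ⁅a, a'⁆ = ((⁅(⟨a, ha⟩ : A), (⟨a', ha'⟩ : A)⁆ : A) : V) := rfl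
        _ = ((0 : A) : V) := by rw [this]
        _ = 0 := rfl
    rw [hφ, h2, map_zero]
  have hRO : R ≤ O := by
    intro r hr
    simp only [hO, Submodule.mem_comap, Submodule.mem_dualAnnihilator]
    intro a' _
    rw [hφ]; exact hr a'
  let φ' : As →ₗ[k] Dual k V := φ.comp As.subtype
  have hker' : LinearMap.ker φ' = Submodule.comap As.subtype R := by
    rw [← hkerφ]; rfl
  have hrange : LinearMap.range φ' ≤ O.dualAnnihilator := by
    rintro - ⟨a, rfl⟩
    rw [Submodule.mem_dualAnnihilator]
    intro x hx
    have hx' : ξ ⁅x, (a : V)⁆ = 0 := by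
      simp only [hO, Submodule.mem_comap, Submodule.mem_dualAnnihilator] at hx
      exact hx a a.2
    have : φ' a x = ξ ⁅(a : V), x⁆ := rfl
    rw [this, ← lie_skew, map_neg, hx', neg_zero]
  have h1 : finrank k (LinearMap.range φ') + finrank k (LinearMap.ker φ') = finrank k As :=
    LinearMap.finrank_range_add_finrank_ker φ'
  have h2 : finrank k (LinearMap.ker φ') = finrank k (As ⊓ R : Submodule k V) := by
    rw [hker']
    rw [← Submodule.map_comap_subtype]
    exact (Submodule.equivMapOfInjective As.subtype (Submodule.injective_subtype As)
      (Submodule.comap As.subtype R)).finrank_eq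
  have h3 : finrank k (LinearMap.range φ') ≤ finrank k O.dualAnnihilator :=
    Submodule.finrank_mono hrange
  have h4 : finrank k O.dualAnnihilator + finrank k O = finrank k V := by
    rw [← (Subspace.quotEquivAnnihilator O).finrank_eq]
    exact Submodule.finrank_quotient_add_finrank O
  have h5 : finrank k (As ⊔ R : Submodule k V) ≤ finrank k O :=
    Submodule.finrank_mono (sup_le hAO hRO)
  have h6 : finrank k (As ⊔ R : Submodule k V) + finrank k (As ⊓ R : Submodule k V)
      = finrank k As + finrank k R := Submodule.finrank_sup_add_finrank_inf_eq As R
  have h7 : finrank k (As ⊓ R : Submodule k V) ≤ finrank k R :=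
    Submodule.finrank_mono inf_le_right
  have h8 : finrank k A = finrank k As := rfl
  omega

/-- The submodule of matrices supported on a set `S` of positions. -/
def suppSub (k : Type*) [Field k] (n : ℕ) (S : Set (Fin n × Fin n)) :
    Submodule k (Matrix (Fin n) (Fin n) k) where
  carrier := {M | ∀ i j, (i, j) ∉ S → M i j = 0}
  add_mem' := by intro a b ha hb i j h; simp [Matrix.add_apply, ha i j h, hb i j h]
  zero_mem' := by intro i j h; simp
  smul_mem' := by intro c a ha i j h; simp [Matrix.smul_apply, ha i j h]

open scoped Classical in
/-- `suppSub` is linearly equivalent to functions on `S`. -/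
noncomputable def suppEquiv (n : ℕ) (S : Set (Fin n × Fin n)) :
    suppSub k n S ≃ₗ[k] (S → k) where
  toFun M p := (M : Matrix (Fin n) (Fin n) k) p.1.1 p.1.2
  map_add' M N := rfl
  map_smul' c M := rfl
  invFun f := ⟨Matrix.of fun i j => if h : (i, j) ∈ S then f ⟨(i, j), h⟩ else 0, by
    intro i j h; simp [h]⟩
  left_inv M := by
    ext i j
    by_cases h : (i, j) ∈ S
    · simp [h]
    · simp [h, M.2 i j h]
  right_inv f := by
    funext p
    simp

lemma finrank_suppSub (n : ℕ) (S : Set (Fin n × Fin n)) :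
    finrank k (suppSub k n S) = Nat.card S := by
  classical
  rw [(suppEquiv n S).finrank_eq, Module.finrank_fintype_fun_eq_card, Nat.card_eq_fintype_card]

lemma card_lt_aux (n : ℕ) :
    Nat.card {p : Fin n × Fin n // p.1 < p.2} = n * (n - 1) / 2 := by
  have e : {p : Fin n × Fin n // p.1 < p.2} ≃ Σ j : Fin n, Fin j.val :=
    { toFun := fun p => ⟨p.1.2, ⟨p.1.1.val, p.2⟩⟩
      invFun := fun x => ⟨(⟨x.2.val, lt_trans x.2.2 x.1.2⟩, x.1), x.2.2⟩
      left_inv := fun p => by ext <;> rfl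
      right_inv := fun x => by rfl }
  rw [Nat.card_congr e, Nat.card_eq_fintype_card, Fintype.card_sigma]
  simp only [Fintype.card_fin]
  rw [Fin.sum_univ_eq_sum_range (fun i => i) n, Finset.sum_range_id]

lemma card_block_aux (n q : ℕ) (hq : q ≤ n) :
    Nat.card {p : Fin n × Fin n // (p.1 : ℕ) < q ∧ q ≤ (p.2 : ℕ)} = q * (n - q) := by
  have e : {p : Fin n × Fin n // (p.1 : ℕ) < q ∧ q ≤ (p.2 : ℕ)} ≃
      {i : Fin n // (i : ℕ) < q} × {j : Fin n // q ≤ (j : ℕ)} :=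
    Equiv.subtypeProdEquivProd (p := fun i : Fin n => (i : ℕ) < q)
      (q := fun j : Fin n => q ≤ (j : ℕ))
  have e1 : {i : Fin n // (i : ℕ) < q} ≃ Fin q :=
    { toFun := fun x => ⟨x.1.val, x.2⟩
      invFun := fun y => ⟨⟨y.val, lt_of_lt_of_le y.2 hq⟩, y.2⟩
      left_inv := fun x => by ext; rfl
      right_inv := fun y => by rfl }
  have e2 : {j : Fin n // q ≤ (j : ℕ)} ≃ Fin (n - q) :=
    { toFun := fun x => ⟨x.1.val - q, by have := x.1.2; have := x.2; omega⟩
      invFun := fun y => ⟨⟨y.val + q, by have := y.2; omega⟩, by simp⟩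
      left_inv := fun x => by
        ext
        have := x.2
        simp only []
        omega
      right_inv := fun y => by
        ext
        simp }
  rw [Nat.card_congr (e.trans (Equiv.prodCongr e1 e2)), Nat.card_eq_fintype_card,
    Fintype.card_prod, Fintype.card_fin, Fintype.card_fin]

lemma arith_aux (n q : ℕ) (hq : q = n / 2) :
    (n * (n - 1) / 2 + n / 2) / 2 = q * (n - q) ∧ q * (n - q) = n ^ 2 / 4 := by
  subst hq
  rcases Nat.even_or_odd n with ⟨m, hm⟩ | ⟨m, hm⟩
  · subst hm
    have h0 : m + m = 2 * m := by ring
    rw [h0]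
    have h1 : 2 * m / 2 = m := by omega
    have h2 : 2 * m * (2 * m - 1) / 2 = m * (2 * m - 1) := by
      rw [show 2 * m * (2 * m - 1) = 2 * (m * (2 * m - 1)) by ring]
      omega
    have h3 : m * (2 * m - 1) + m = 2 * (m * m) := by
      cases m with
      | zero => simp
      | succ j => rw [show 2 * (j + 1) - 1 = 2 * j + 1 by omega]; ring
    have h4 : (2 * m) ^ 2 = 4 * (m * m) := by ring
    rw [h1, h2, h3, h4]
    have h5 : 2 * m - m = m := by omega
    rw [h5]
    omega
  · subst hm
    have h1 : (2 * m + 1) / 2 = m := by omega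
    have h2 : (2 * m + 1) * (2 * m + 1 - 1) / 2 = (2 * m + 1) * m := by
      rw [show 2 * m + 1 - 1 = 2 * m by omega,
        show (2 * m + 1) * (2 * m) = 2 * ((2 * m + 1) * m) by ring]
      omega
    have h3 : (2 * m + 1) * m + m = 2 * (m * m + m) := by ring
    have h4 : (2 * m + 1) ^ 2 = 4 * (m * m + m) + 1 := by ring
    rw [h1, h2, h3, h4]
    have h5 : 2 * m + 1 - m = m + 1 := by omega
    rw [h5]
    have h6 : m * (m + 1) = m * m + m := by ring
    omega

instance (n : ℕ) : FiniteDimensional k (strictUpper k n) :=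
  inferInstanceAs (FiniteDimensional k (strictUpper k n).toSubmodule)

lemma finrank_strictUpper (n : ℕ) : finrank k (strictUpper k n) = n * (n - 1) / 2 := by
  have hLsub : (strictUpper k n).toSubmodule = suppSub k n {p : Fin n × Fin n | p.1 < p.2} := by
    ext M
    constructor
    · intro hM i j hij
      exact hM i j (le_of_not_gt (by simpa using hij))
    · intro hM i j hij
      exact hM i j (not_lt.mpr hij)
  have h : finrank k (strictUpper k n) = finrank k (strictUpper k n).toSubmodule := rfl
  rw [h, hLsub, finrank_suppSub]
  exact card_lt_aux n

end Aux

/-- given `i(N_n) = ⌊n/2⌋`, the abelian ideal `P` satisfies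
`dim P = c(N_n)`, i.e. `P` is a commutative polarization of `N_n`, and hence
`α(N_n) = ⌊n²/4⌋`. -/
theorem strictUpper_CP (k : Type*) [Field k] [CharZero k] (n : ℕ) (q : ℕ)
    (hq : q = n / 2)
    (hindex : lieIndex k (strictUpper k n) = n / 2)
    (P : Submodule k (Matrix (Fin n) (Fin n) k))
    (hP : P = Submodule.span k
      {M | ∃ i j : Fin n, (i : ℕ) < q ∧ q ≤ (j : ℕ) ∧ M = Matrix.single i j (1 : k)}) :
    finrank k P = magic k (strictUpper k n) ∧
    (∃ Q : LieSubalgebra k (strictUpper k n), IsLieAbelian Q ∧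
      finrank k Q = magic k (strictUpper k n)) ∧
    maxAbelianDim k (strictUpper k n) = n ^ 2 / 4 := by
  classical
  obtain ⟨harith1, harith2⟩ := arith_aux n q hq
  have hqn : q ≤ n := by omega
  set S2 : Set (Fin n × Fin n) := {p | (p.1 : ℕ) < q ∧ q ≤ (p.2 : ℕ)} with hS2
  -- the magic number
  have hmagic : magic k (strictUpper k n) = q * (n - q) := by
    rw [magic, finrank_strictUpper, hindex, harith1]
  -- P is the support submodule
  have hP' : P = suppSub k n S2 := by
    rw [hP]
    apply le_antisymm
    · rw [Submodule.span_le]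
      rintro M ⟨i, j, hi, hj, rfl⟩
      intro i' j' h'
      have : ¬(i = i' ∧ j = j') := by
        rintro ⟨rfl, rfl⟩
        exact h' ⟨hi, hj⟩
      simp [Matrix.single, this]
    · intro M hM
      have hrep := Matrix.matrix_eq_sum_single M
      rw [hrep]
      apply Submodule.sum_mem
      intro i _
      apply Submodule.sum_mem
      intro j _
      by_cases hij : (i, j) ∈ S2
      · have he : Matrix.single i j (M i j) = (M i j) • Matrix.single i j 1 := by
          rw [Matrix.smul_single, smul_eq_mul, mul_one]
        rw [he]
        exact Submodule.smul_mem _ _ (Submodule.subset_span ⟨i, j, hij.1, hij.2, rfl⟩)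
      · rw [hM i j hij]
        simp
  -- dimension of P
  have hdimP : finrank k P = q * (n - q) := by
    rw [hP', finrank_suppSub]
    exact card_block_aux n q hqn
  -- suppSub S2 is contained in strictUpper
  have hPL : suppSub k n S2 ≤ (strictUpper k n).toSubmodule := by
    intro M hM i j hij
    apply hM i j
    rintro ⟨h1, h2⟩
    have : (i : ℕ) < (j : ℕ) := lt_of_lt_of_le h1 h2
    have : (j : ℕ) ≤ (i : ℕ) := hij
    omega
  -- products of matrices in suppSub S2 vanish
  have hmul : ∀ A B : Matrix (Fin n) (Fin n) k,
      A ∈ suppSub k n S2 → B ∈ suppSub k n S2 → A * B = 0 := by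
    intro A B hA hB
    ext i l
    rw [Matrix.mul_apply, Matrix.zero_apply]
    refine Finset.sum_eq_zero fun m _ => ?_
    rcases lt_or_ge (m : ℕ) q with h' | h'
    · refine Eq.trans (congrArg (· * B m l) (hA i m ?_)) (zero_mul _)
      intro hc
      have h2 : q ≤ (m : ℕ) := hc.2
      omega
    · refine Eq.trans (congrArg ((A i m) * ·) (hB m l ?_)) (mul_zero _)
      intro hc
      have h1 : (m : ℕ) < q := hc.1
      omega
  -- the abelian subalgebra Q
  let Q : LieSubalgebra k (strictUpper k n) :=
    { carrier := {x | (x : Matrix (Fin n) (Fin n) k) ∈ suppSub k n S2}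
      add_mem' := by
        intro a b ha hb i j h
        have : ((a + b : strictUpper k n) : Matrix (Fin n) (Fin n) k) i j
            = (a : Matrix (Fin n) (Fin n) k) i j + (b : Matrix (Fin n) (Fin n) k) i j := rfl
        rw [this, ha i j h, hb i j h, add_zero]
      zero_mem' := by
        intro i j h
        rfl
      smul_mem' := by
        intro c a ha i j h
        have : ((c • a : strictUpper k n) : Matrix (Fin n) (Fin n) k) i j
            = c * (a : Matrix (Fin n) (Fin n) k) i j := rfl
        rw [this, ha i j h, mul_zero]
      lie_mem' := by
        intro x y hx hy
        show ((⁅x, y⁆ : strictUpper k n) : Matrix (Fin n) (Fin n) k) ∈ suppSub k n S2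
        have hco : ((⁅x, y⁆ : strictUpper k n) : Matrix (Fin n) (Fin n) k)
            = ⁅(x : Matrix (Fin n) (Fin n) k), (y : Matrix (Fin n) (Fin n) k)⁆ := rfl
        have hbr : (⁅(x : Matrix (Fin n) (Fin n) k), (y : Matrix (Fin n) (Fin n) k)⁆ :
            Matrix (Fin n) (Fin n) k)
            = (x : Matrix (Fin n) (Fin n) k) * y - (y : Matrix (Fin n) (Fin n) k) * x := rfl
        rw [hco, hbr, hmul _ _ hx hy, hmul _ _ hy hx, sub_zero]
        exact Submodule.zero_mem _ }
  have hQab : IsLieAbelian Q := by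
    constructor
    intro x y
    have h0 : ((⁅x, y⁆ : Q) : Matrix (Fin n) (Fin n) k)
        = (x : Matrix (Fin n) (Fin n) k) * y - (y : Matrix (Fin n) (Fin n) k) * x := rfl
    have h1 : ((⁅x, y⁆ : Q) : Matrix (Fin n) (Fin n) k) = 0 := by
      rw [h0, hmul _ _ x.2 y.2, hmul _ _ y.2 x.2, sub_zero]
    exact Subtype.ext (Subtype.ext h1)
  have hQequiv : finrank k Q = finrank k (suppSub k n S2) := by
    refine LinearEquiv.finrank_eq ?_
    exact
      { toFun := fun x => ⟨(x.1 : Matrix (Fin n) (Fin n) k), x.2⟩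
        map_add' := fun a b => rfl
        map_smul' := fun c a => rfl
        invFun := fun y => ⟨⟨(y : Matrix (Fin n) (Fin n) k), hPL y.2⟩, y.2⟩
        left_inv := fun a => rfl
        right_inv := fun a => rfl }
  have hdimQ : finrank k Q = q * (n - q) := by
    rw [hQequiv, finrank_suppSub]
    exact card_block_aux n q hqn
  -- upper bound on abelian dimensions
  have hξ : ∃ ξ : Dual k (strictUpper k n),
      finrank k (lieStab k (strictUpper k n) ξ) = lieIndex k (strictUpper k n) := by
    have hne : (Set.range fun ξ : Module.Dual k (strictUpper k n) =>
        finrank k (lieStab k (strictUpper k n) ξ)).Nonempty := ⟨_, ⟨0, rfl⟩⟩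
    obtain ⟨ξ, hξ⟩ := Nat.sInf_mem hne
    exact ⟨ξ, hξ⟩
  obtain ⟨ξ, hξ⟩ := hξ
  have hub : ∀ d ∈ {d : ℕ | ∃ H : LieSubalgebra k (strictUpper k n),
      IsLieAbelian H ∧ finrank k H = d}, d ≤ magic k (strictUpper k n) := by
    rintro d ⟨H, hH, rfl⟩
    have hb := abelian_bound (strictUpper k n) ξ H hH
    rw [hξ] at hb
    rw [magic]
    rw [Nat.le_div_iff_mul_le (by norm_num)]
    omega
  have hmem : magic k (strictUpper k n) ∈ {d : ℕ | ∃ H : LieSubalgebra k (strictUpper k n),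
      IsLieAbelian H ∧ finrank k H = d} := ⟨Q, hQab, by rw [hdimQ, hmagic]⟩
  refine ⟨by rw [hdimP, hmagic], ⟨Q, hQab, by rw [hdimQ, hmagic]⟩, ?_⟩
  have hsup : maxAbelianDim k (strictUpper k n) = magic k (strictUpper k n) := by
    rw [maxAbelianDim]
    exact le_antisymm (csSup_le ⟨_, hmem⟩ hub) (le_csSup ⟨_, hub⟩ hmem)
  rw [hsup, hmagic, harith2]
end

section
/- Let L be an n-dimensional filiform Lie algebra with minimal index: i(L) = 1 if n is odd, i(L) = 2 if n is even. Then L satisfies Rentschler's property α(L) ≥ c(L) − 1; moreover if n is odd (so i(L) = 1) then the q-dimensional abelian ideal H = C^{q−1}(L), q = (n+1)/2, is a commutative polarization (dim H = c(L)). -/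
open Module

/-- a filiform Lie algebra of minimal index satisfies Rentschler's property,
and when `n` is odd (so `i(L) = 1`) the abelian ideal `H = C^{q-1}(L) = span(x_q,…,x_n)`
(0-indexed: span of the `x l` with `l ≥ n - q`, `q = (n+1)/2`) is a commutative polarization:
`dim H = c(L)`. -/
theorem filiform_minimal_index_rentschler (k : Type*) [Field k] [CharZero k]
    (L : Type*) [LieRing L] [LieAlgebra k L] [Module.Finite k L]
    (n : ℕ) (b : Basis (Fin n) k L) (x : ℕ → L)
    (hx : ∀ i (h : i < n), x i = b ⟨i, h⟩) (hx0 : ∀ i, n ≤ i → x i = 0)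
    (had1 : ∀ i, 1 ≤ i → i ≤ n - 2 → ⁅x 0, x i⁆ = x (i + 1))
    (had1' : ⁅x 0, x (n - 1)⁆ = 0)
    (had2 : ∀ i j, 1 ≤ i → 1 ≤ j →
      ⁅x i, x j⁆ ∈ Submodule.span k {v | ∃ l, i + j + 1 ≤ l ∧ v = x l})
    (hiodd : Odd n → lieIndex k L = 1) (hieven : Even n → lieIndex k L = 2)
    (q : ℕ) (hq : q = (n + 1) / 2)
    (H : Submodule k L) (hH : H = Submodule.span k {v | ∃ l, n - q ≤ l ∧ v = x l}) :
    magic k L - 1 ≤ maxAbelianDim k L ∧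
    (Odd n → finrank k H = magic k L ∧ ∀ a ∈ H, ∀ c ∈ H, ⁅a, c⁆ = 0) := by
  have hdimL : finrank k L = n := by
    rw [finrank_eq_card_basis b, Fintype.card_fin]
  have hqn : q ≤ n ∧ n - q ≤ n := by omega
  -- brackets of generators vanish
  have key : ∀ l m, n - q ≤ l → n - q ≤ m → ⁅x l, x m⁆ = 0 := by
    intro l m hl hm
    by_cases hln : n ≤ l
    · rw [hx0 l hln, zero_lie]
    by_cases hmn : n ≤ m
    · rw [hx0 m hmn, lie_zero]
    push_neg at hln hmn
    rcases Nat.eq_zero_or_pos l with hl0 | hl1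
    · have hm0 : m = 0 := by omega
      rw [hl0, hm0]; exact lie_self _
    rcases Nat.eq_zero_or_pos m with hm0 | hm1
    · have hl0 : l = 0 := by omega
      rw [hl0, hm0]; exact lie_self _
    have hmem := had2 l m hl1 hm1
    have hbot : Submodule.span k {v | ∃ t, l + m + 1 ≤ t ∧ v = x t} = (⊥ : Submodule k L) := by
      rw [Submodule.span_eq_bot]
      rintro v ⟨t, ht, rfl⟩
      exact hx0 t (by omega)
    rw [hbot] at hmem
    simpa using hmem
  -- H is abelian
  have habH : ∀ a ∈ H, ∀ c ∈ H, ⁅a, c⁆ = 0 := by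
    rw [hH]
    intro a ha
    induction ha using Submodule.span_induction with
    | mem v hv =>
      obtain ⟨l, hl, rfl⟩ := hv
      intro c hc
      induction hc using Submodule.span_induction with
      | mem w hw => obtain ⟨m, hm, rfl⟩ := hw; exact key l m hl hm
      | zero => exact lie_zero _
      | add y z _ _ hy hz => rw [lie_add, hy, hz, add_zero]
      | smul t y _ hy => rw [lie_smul, hy, smul_zero]
    | zero => intro c _; exact zero_lie _
    | add y z _ _ hy hz => intro c hc; rw [add_lie, hy c hc, hz c hc, add_zero]
    | smul t y _ hy => intro c hc; rw [smul_lie, hy c hc, smul_zero]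
  -- the dimension of H is q
  have hfr : finrank k H = q := by
    have hlt : ∀ i : Fin q, n - q + (i : ℕ) < n := fun i => by
      have := i.isLt; omega
    set f : Fin q → L := fun i => b ⟨n - q + (i : ℕ), hlt i⟩ with hf
    have hinj : Function.Injective (fun i : Fin q => (⟨n - q + (i : ℕ), hlt i⟩ : Fin n)) := by
      intro i j hij
      simp only [Fin.mk.injEq] at hij
      exact Fin.ext (by omega)
    have hli : LinearIndependent k f := b.linearIndependent.comp _ hinj
    have hHf : H = Submodule.span k (Set.range f) := by
      rw [hH]
      apply le_antisymm
      · rw [Submodule.span_le]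
        rintro v ⟨l, hl, rfl⟩
        by_cases hln : n ≤ l
        · rw [hx0 l hln]; exact Submodule.zero_mem _
        · push_neg at hln
          apply Submodule.subset_span
          refine ⟨⟨l - (n - q), by omega⟩, ?_⟩
          rw [hf]
          simp only
          rw [hx l hln]
          congr 1
          exact Fin.ext (by simp; omega)
      · rw [Submodule.span_le]
        rintro v ⟨i, rfl⟩
        apply Submodule.subset_span
        exact ⟨n - q + (i : ℕ), by omega, by rw [hx _ (hlt i), hf]⟩
    rw [hHf, finrank_span_eq_card hli, Fintype.card_fin]
  -- α(L) ≥ q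
  have hmax : q ≤ maxAbelianDim k L := by
    have hBdd : BddAbove {d : ℕ | ∃ H' : LieSubalgebra k L, IsLieAbelian H' ∧ finrank k H' = d} := by
      refine ⟨finrank k L, ?_⟩
      rintro d ⟨H', _, rfl⟩
      exact Submodule.finrank_le H'.toSubmodule
    apply le_csSup hBdd
    refine ⟨⟨H, fun {a c} ha hc => ?_⟩, ⟨fun a c => ?_⟩, hfr⟩
    · show ⁅a, c⁆ ∈ H
      rw [habH a ha c hc]; exact H.zero_mem
    · apply Subtype.ext
      rw [LieSubalgebra.coe_bracket]
      show ⁅(a : L), (c : L)⁆ = ((0 : _) : L)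
      rw [habH a a.2 c c.2]
  constructor
  · rcases Nat.even_or_odd n with he | ho
    · have : magic k L = (n + 2) / 2 := by
        rw [magic, hdimL, hieven he]
      omega
    · have : magic k L = (n + 1) / 2 := by
        rw [magic, hdimL, hiodd ho]
      omega
  · intro ho
    have hm : magic k L = (n + 1) / 2 := by
      rw [magic, hdimL, hiodd ho]
    refine ⟨by rw [hfr, hm, hq], habH⟩
end

section
/- Let L be a 7-dimensional nilpotent Lie algebra over an algebraically closed field of characteristic zero with i(L) = 3 and dim Z(L) = 2. Then L possesses a 4-dimensional abelian subalgebra; that is, α(L) ≥ 4 = c(L) − 1. -/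
open Module

/-- a 7-dimensional nilpotent Lie algebra with index 3 and 2-dimensional
center possesses a 4-dimensional abelian subalgebra, so `α(L) ≥ 4 = c(L) - 1`. -/
theorem dim7_nilpotent_abelian_subalgebra (k : Type*) [Field k] [IsAlgClosed k] [CharZero k]
    (L : Type*) [LieRing L] [LieAlgebra k L] [Module.Finite k L]
    [LieRing.IsNilpotent L]
    (hdim : finrank k L = 7) (hindex : lieIndex k L = 3)
    (hcenter : finrank k (LieAlgebra.center k L) = 2) :
    (∃ H : LieSubalgebra k L, IsLieAbelian H ∧ finrank k H = 4) ∧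
    4 ≤ maxAbelianDim k L ∧ magic k L - 1 = 4 := by
  have hFD : FiniteDimensional k L := inferInstance
  set Z : LieSubmodule k L L := LieAlgebra.center k L with hZdef
  -- the second center strictly contains the center
  have hZne : Z.normalizer ≠ Z := by
    intro h
    obtain ⟨m, hm⟩ := (LieModule.isNilpotent_iff_exists_ucs_eq_top (R := k) (L := L)
      (M := L)).mp inferInstance
    have htop : (⊤ : LieSubmodule k L L) ≤ Z := hm ▸ LieSubmodule.ucs_le_of_normalizer_eq_self h m
    have hZt : Z = ⊤ := le_antisymm le_top htop
    have e1 : finrank k Z = finrank k Z.toSubmodule := rfl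
    have e2 : Z.toSubmodule = ⊤ := by rw [hZt]; rfl
    have : finrank k Z = 7 := by rw [e1, e2, finrank_top, hdim]
    omega
  obtain ⟨v, hvN, hvZ⟩ := SetLike.exists_of_lt (lt_of_le_of_ne Z.le_normalizer hZne.symm)
  have hv2 : ∀ x : L, ⁅x, v⁆ ∈ Z := (LieSubmodule.mem_normalizer Z v).mp hvN
  have hv0 : v ≠ 0 := fun h => hvZ (h ▸ Z.zero_mem)
  -- the kernel of ad v has dimension at least 5
  set φ : L →ₗ[k] L := LieAlgebra.ad k L v with hφdef
  have hrange : LinearMap.range φ ≤ Z.toSubmodule := by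
    rintro _ ⟨x, rfl⟩
    have : ⁅v, x⁆ = -⁅x, v⁆ := by rw [← lie_skew]
    simp only [hφdef, LieAlgebra.ad_apply, this]
    exact Z.toSubmodule.neg_mem (hv2 x)
  have hrange2 : finrank k (LinearMap.range φ) ≤ 2 := by
    have h := Submodule.finrank_mono hrange
    have h2 : finrank k Z.toSubmodule = 2 := hcenter
    omega
  have hker5 : 5 ≤ finrank k (LinearMap.ker φ) := by
    have h := LinearMap.finrank_range_add_finrank_ker φ
    rw [hdim] at h
    omega
  -- find u in ker(ad v) outside of span v ⊔ Z
  set S : Submodule k L := (k ∙ v) ⊔ Z.toSubmodule with hSdef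
  have hvZ' : v ∉ Z.toSubmodule := hvZ
  have hdisjS : Disjoint Z.toSubmodule (k ∙ v) :=
    (Submodule.disjoint_span_singleton' hv0).mpr hvZ'
  have hS3 : finrank k S = 3 := by
    have h := Submodule.finrank_sup_add_finrank_inf_eq (k ∙ v) Z.toSubmodule
    rw [disjoint_comm] at hdisjS
    rw [hdisjS.eq_bot, finrank_bot, finrank_span_singleton hv0, ← hSdef] at h
    have h2 : finrank k Z.toSubmodule = 2 := hcenter
    omega
  have hnotle : ¬ LinearMap.ker φ ≤ S := by
    intro h
    have := Submodule.finrank_mono h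
    omega
  obtain ⟨u, huk, huS⟩ := SetLike.not_le_iff_exists.mp hnotle
  have hu0 : u ≠ 0 := fun h => huS (h ▸ S.zero_mem)
  have hvu : ⁅v, u⁆ = 0 := by simpa [hφdef] using (LinearMap.mem_ker.mp huk)
  have huv : ⁅u, v⁆ = 0 := by rw [← lie_skew, hvu, neg_zero]
  -- the abelian subspace W
  set W : Submodule k L := (k ∙ u) ⊔ S with hWdef
  have hW4 : finrank k W = 4 := by
    have hdisjW : Disjoint S (k ∙ u) := (Submodule.disjoint_span_singleton' hu0).mpr huS
    have h := Submodule.finrank_sup_add_finrank_inf_eq (k ∙ u) S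
    rw [disjoint_comm] at hdisjW
    rw [hdisjW.eq_bot, finrank_bot, finrank_span_singleton hu0, ← hWdef] at h
    omega
  have hcent : ∀ c ∈ Z, ∀ y : L, ⁅c, y⁆ = 0 := by
    intro c hc y
    have : ⁅y, c⁆ = 0 := (LieModule.mem_maxTrivSubmodule k L L c).mp hc y
    rw [← lie_skew, this, neg_zero]
  have hker_of : ∀ a : L, (∀ y ∈ W, ⁅a, y⁆ = 0) → True := fun _ _ => trivial
  have hWker : ∀ a : L, ⁅a, u⁆ = 0 → ⁅a, v⁆ = 0 → W ≤ LinearMap.ker (LieAlgebra.ad k L a) := by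
    intro a hau hav
    refine sup_le (Submodule.span_le.mpr ?_) (sup_le (Submodule.span_le.mpr ?_) ?_)
    · rintro _ rfl
      simp [LieAlgebra.ad_apply, hau]
    · rintro _ rfl
      simp [LieAlgebra.ad_apply, hav]
    · intro c hc
      have : ⁅a, c⁆ = 0 := (LieModule.mem_maxTrivSubmodule k L L c).mp hc a
      simp [LieAlgebra.ad_apply, this]
  have hWu : W ≤ LinearMap.ker (LieAlgebra.ad k L u) := hWker u (lie_self u) huv
  have hWv : W ≤ LinearMap.ker (LieAlgebra.ad k L v) := hWker v hvu (lie_self v)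
  have hcomm : ∀ x ∈ W, ∀ y ∈ W, ⁅x, y⁆ = 0 := by
    intro x hx y hy
    obtain ⟨a, ha, s, hs, rfl⟩ := Submodule.mem_sup.mp hx
    obtain ⟨b, hb, c, hc, rfl⟩ := Submodule.mem_sup.mp hs
    obtain ⟨t, rfl⟩ := Submodule.mem_span_singleton.mp ha
    obtain ⟨r, rfl⟩ := Submodule.mem_span_singleton.mp hb
    have h1 : ⁅u, y⁆ = 0 := by simpa [LieAlgebra.ad_apply] using LinearMap.mem_ker.mp (hWu hy)
    have h2 : ⁅v, y⁆ = 0 := by simpa [LieAlgebra.ad_apply] using LinearMap.mem_ker.mp (hWv hy)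
    have h3 : ⁅c, y⁆ = 0 := hcent c hc y
    simp [add_lie, smul_lie, h1, h2, h3]
  -- the subalgebra
  set H : LieSubalgebra k L :=
    { W with
      lie_mem' := fun {x y} hx hy => by
        have : ⁅x, y⁆ = 0 := hcomm x hx y hy
        rw [this]; exact W.zero_mem } with hHdef
  have hHab : IsLieAbelian H := by
    constructor
    intro x y
    apply Subtype.ext
    exact hcomm x.1 x.2 y.1 y.2
  have hH4 : finrank k H = 4 := hW4
  refine ⟨⟨H, hHab, hH4⟩, ?_, ?_⟩
  · apply le_csSup
    · refine ⟨7, ?_⟩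
      rintro d ⟨K, -, rfl⟩
      have h1 : finrank k K = finrank k K.toSubmodule := rfl
      have h2 := Submodule.finrank_le K.toSubmodule
      omega
    · exact ⟨H, hHab, hH4⟩
  · simp [magic, hdim, hindex]
end

section
/- Let L be an n-dimensional metabelian Lie algebra with t = dim[L,L] = 2 and i(L) = 2 (so n is even, n = 2q). Assuming Milenteva's bound α(L) ≥ ⌊(2n + t² + t)/(t + 2)⌋, it follows that α(L) = c(L) = q + 1, i.e. L admits a commutative polarization. Moreover in this situation [L,L] = Z(L). -/
open Module

section linalg
variable {k : Type*} [Field k]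

lemma finrank_ker_comp_le {V₁ V₂ V₃ : Type*} [AddCommGroup V₁] [Module k V₁]
    [AddCommGroup V₂] [Module k V₂] [AddCommGroup V₃] [Module k V₃]
    [FiniteDimensional k V₁] [FiniteDimensional k V₂]
    (f : V₁ →ₗ[k] V₂) (g : V₂ →ₗ[k] V₃) :
    finrank k (LinearMap.ker (g.comp f)) ≤ finrank k (LinearMap.ker f)
      + finrank k (LinearMap.ker g) := by
  classical
  set K := LinearMap.ker (g.comp f) with hK
  let f' : K →ₗ[k] V₂ := f.domRestrict K
  have h1 : finrank k (LinearMap.range f') + finrank k (LinearMap.ker f') = finrank k K :=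
    LinearMap.finrank_range_add_finrank_ker f'
  have h2 : finrank k (LinearMap.range f') ≤ finrank k (LinearMap.ker g) := by
    apply Submodule.finrank_mono
    rintro y ⟨⟨x, hx⟩, rfl⟩
    exact hx
  have h3 : finrank k (LinearMap.ker f') ≤ finrank k (LinearMap.ker f) := by
    rw [← Submodule.finrank_map_subtype_eq K (LinearMap.ker f')]
    apply Submodule.finrank_mono
    rintro x ⟨y, hy, rfl⟩
    simpa [f', LinearMap.mem_ker] using hy
  omega

variable {V : Type*} [AddCommGroup V] [Module k V] [Module.Finite k V]

/-- Abstract isotropic-subspace bound: if `W` is isotropic for the pairing given by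
`Φ : V → V*`, then `2 dim W ≤ dim V + dim ker Φ`. -/
lemma isotropic_bound (Φ : V →ₗ[k] Module.Dual k V) (W : Submodule k V)
    (hW : ∀ x ∈ W, ∀ y ∈ W, Φ x y = 0) :
    2 * finrank k W ≤ finrank k V + finrank k (LinearMap.ker Φ) := by
  classical
  let r : Module.Dual k V →ₗ[k] Module.Dual k W := W.subtype.dualMap
  let ψ : V →ₗ[k] Module.Dual k W := r.comp Φ
  have hWker : W ≤ LinearMap.ker ψ := by
    intro x hx
    rw [LinearMap.mem_ker]
    ext w
    exact hW x hx w w.2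
  have a2 : finrank k (LinearMap.range ψ) + finrank k (LinearMap.ker ψ) = finrank k V :=
    LinearMap.finrank_range_add_finrank_ker ψ
  have a3 : finrank k W ≤ finrank k (LinearMap.ker ψ) := Submodule.finrank_mono hWker
  have a5 : finrank k W + finrank k (LinearMap.ker r) = finrank k V := by
    have hsurj : Function.Surjective r :=
      LinearMap.dualMap_surjective_of_injective W.injective_subtype
    have h1 : finrank k (LinearMap.range r) + finrank k (LinearMap.ker r)
        = finrank k (Module.Dual k V) := LinearMap.finrank_range_add_finrank_ker r
    rw [LinearMap.range_eq_top.mpr hsurj, finrank_top, Subspace.dual_finrank_eq,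
      Subspace.dual_finrank_eq] at h1
    omega
  have a6 : finrank k (LinearMap.ker ψ) ≤ finrank k (LinearMap.ker Φ)
      + finrank k (LinearMap.ker r) := finrank_ker_comp_le Φ r
  omega

end linalg

section lie
variable (k : Type*) [Field k] (L : Type*) [LieRing L] [LieAlgebra k L] [Module.Finite k L]
attribute [local instance] LieRing.ofAssociativeRing

/-- `α(L) ≤ (dim L + dim L(ξ))/2` for every `ξ`: abelian subalgebras are isotropic. -/
lemma abelian_le_half (ξ : Module.Dual k L) (H : LieSubalgebra k L) (hH : IsLieAbelian H) :
    2 * finrank k H ≤ finrank k L + finrank k (lieStab k L ξ) := by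
  classical
  let Φ : L →ₗ[k] Module.Dual k L :=
    (LinearMap.llcomp k L L k ξ).comp (LieAlgebra.ad k L).toLinearMap
  have hΦ : ∀ x y, Φ x y = ξ ⁅x, y⁆ := fun x y => rfl
  have hker : LinearMap.ker Φ = lieStab k L ξ := by
    ext x
    simp only [LinearMap.mem_ker, LinearMap.ext_iff]
    constructor
    · intro h y; exact h y
    · intro h y; exact h y
  have := isotropic_bound Φ H.toSubmodule (by
    intro x hx y hy
    have h0 : (⁅(⟨x, hx⟩ : H), (⟨y, hy⟩ : H)⁆ : H) = 0 := trivial_lie_zero _ _ _ _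
    have h1 : ((⁅(⟨x, hx⟩ : H), (⟨y, hy⟩ : H)⁆ : H) : L) = ⁅x, y⁆ := rfl
    rw [h0] at h1
    rw [hΦ, ← h1]
    simp)
  rw [hker] at this
  exact this

end lie

/-- an `n`-dimensional metabelian Lie algebra with `dim [L,L] = 2` and
`i(L) = 2` (so `n = 2q`) admits a commutative polarization: assuming Milenteva's bound
`α(L) ≥ ⌊(2n + t² + t)/(t + 2)⌋` (with `t = 2`), one gets `α(L) = c(L) = q + 1`;
moreover `[L,L] = Z(L)`. -/
theorem metabelian_CP (k : Type*) [Field k] [CharZero k]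
    (L : Type*) [LieRing L] [LieAlgebra k L] [Module.Finite k L]
    (n q : ℕ) (hdim : finrank k L = n) (hn : n = 2 * q)
    (hmeta : LieAlgebra.derivedSeries k L 1 ≤ LieAlgebra.center k L)
    (ht : finrank k (LieAlgebra.derivedSeries k L 1) = 2)
    (hi : lieIndex k L = 2)
    (hMilenteva : (2 * n + 2 ^ 2 + 2) / (2 + 2) ≤ maxAbelianDim k L) :
    maxAbelianDim k L = magic k L ∧ magic k L = q + 1 ∧
    (∃ P : LieSubalgebra k L, IsLieAbelian P ∧ finrank k P = magic k L) ∧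
    LieAlgebra.derivedSeries k L 1 = LieAlgebra.center k L := by
  classical
  -- a minimizing functional
  obtain ⟨ξ₀, hξ₀⟩ : ∃ ξ₀ : Module.Dual k L, finrank k (lieStab k L ξ₀) = lieIndex k L := by
    have h := Nat.sInf_mem (Set.range_nonempty
      (fun ξ : Module.Dual k L => finrank k (lieStab k L ξ)))
    exact h
  rw [hi] at hξ₀
  -- the set of abelian dimensions
  set S : Set ℕ := {d : ℕ | ∃ H : LieSubalgebra k L, IsLieAbelian H ∧ finrank k H = d} with hS
  have habbot : IsLieAbelian (⊥ : LieSubalgebra k L) := by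
    constructor
    intro a b
    have ha : (a : L) = 0 := (LieSubalgebra.mem_bot (R := k) (a : L)).mp a.2
    apply Subtype.ext
    show ⁅(a : L), (b : L)⁆ = 0
    rw [ha, zero_lie]
  have hSne : S.Nonempty := ⟨finrank k (⊥ : LieSubalgebra k L), ⊥, habbot, rfl⟩
  have hub : ∀ d ∈ S, d ≤ q + 1 := by
    rintro d ⟨H, hab, rfl⟩
    have h := abelian_le_half k L ξ₀ H hab
    rw [hξ₀, hdim] at h
    omega
  have hbdd : BddAbove S := ⟨q + 1, fun d hd => hub d hd⟩
  have hαle : maxAbelianDim k L ≤ q + 1 := csSup_le hSne hub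
  have hαge : q + 1 ≤ maxAbelianDim k L := by
    have : (2 * n + 2 ^ 2 + 2) / (2 + 2) = q + 1 := by omega
    omega
  have hα : maxAbelianDim k L = q + 1 := le_antisymm hαle hαge
  have hmagic : magic k L = q + 1 := by
    rw [magic, hdim, hi]
    omega
  refine ⟨by rw [hα, hmagic], hmagic, ?_, ?_⟩
  · -- existence of a maximal abelian subalgebra of dimension q+1
    have hmem : sSup S ∈ S := Nat.sSup_mem hSne hbdd
    have : maxAbelianDim k L ∈ S := hmem
    rw [hα] at this
    obtain ⟨P, hP, hPd⟩ := this
    exact ⟨P, hP, by rw [hPd, hmagic]⟩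
  · -- [L,L] = Z(L)
    have hcstab : (LieAlgebra.center k L : Submodule k L) ≤ lieStab k L ξ₀ := by
      intro x hx
      intro y
      have hzy : ⁅y, x⁆ = 0 := (LieModule.mem_maxTrivSubmodule k L L x).mp hx y
      have : ⁅x, y⁆ = 0 := by rw [← lie_skew, hzy, neg_zero]
      rw [this, map_zero]
    have hcen : finrank k (LieAlgebra.center k L : Submodule k L) ≤ 2 := by
      have := Submodule.finrank_mono hcstab
      omega
    have hle : (LieAlgebra.derivedSeries k L 1 : Submodule k L)
        ≤ (LieAlgebra.center k L : Submodule k L) := hmeta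
    have heq : (LieAlgebra.derivedSeries k L 1 : Submodule k L)
        = (LieAlgebra.center k L : Submodule k L) := by
      apply Submodule.eq_of_le_of_finrank_le hle
      rw [show finrank k (LieAlgebra.derivedSeries k L 1 : Submodule k L) = 2 from ht]
      exact hcen
    exact LieSubmodule.toSubmodule_injective heq
end

section
/- Let L be the 3-dimensional Lie algebra with basis x, y, z and nonzero brackets [x,y] = y, [x,z] = z. Then i(L) = 1 and the Poisson center Y(L) = S(L)^L equals the scalars k. -/
open Module

open MvPolynomial in
lemma X_mul_pderiv_monomial {k : Type*} [Field k] (i : Fin 3) (s : Fin 3 →₀ ℕ) (a : k) :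
    X i * pderiv i (monomial s a) = monomial s ((s i : k) * a) := by
  rw [pderiv_monomial]
  rcases Nat.eq_zero_or_pos (s i) with h | h
  · simp [h]
  · have hs : Finsupp.single i 1 + (s - Finsupp.single i 1) = s := by
      ext j
      rcases eq_or_ne j i with rfl | hj
      · simp [Nat.add_sub_cancel' h]
      · simp [Finsupp.single_apply, Ne.symm hj]
    rw [X, monomial_mul, hs, one_mul, mul_comm]

open MvPolynomial in
lemma coeff_X_mul_pderiv {k : Type*} [Field k] (i : Fin 3) (f : MvPolynomial (Fin 3) k)
    (m : Fin 3 →₀ ℕ) : coeff m (X i * pderiv i f) = (m i : k) * coeff m f := by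
  conv_lhs => rw [f.as_sum]
  rw [map_sum, Finset.mul_sum]
  simp_rw [_root_.X_mul_pderiv_monomial]
  rw [coeff_sum]
  simp_rw [coeff_monomial]
  rw [Finset.sum_eq_single m]
  · by_cases hm : m ∈ f.support
    · simp
    · simp [MvPolynomial.notMem_support_iff.mp hm]
  · intro s _ hs; simp [hs]
  · intro hm; simp [MvPolynomial.notMem_support_iff.mp hm]

open MvPolynomial in
/-- The Poisson bracket on `S(L) = k[x,y,z]` for the Lie algebra with brackets
`[x,y] = y`, `[x,z] = z`, `[y,z] = 0` (here `x = X 0`, `y = X 1`, `z = X 2`). -/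
noncomputable def poissonBracket318 (k : Type*) [Field k]
    (f g : MvPolynomial (Fin 3) k) : MvPolynomial (Fin 3) k :=
  X 1 * (pderiv 0 f * pderiv 1 g - pderiv 1 f * pderiv 0 g) +
  X 2 * (pderiv 0 f * pderiv 2 g - pderiv 2 f * pderiv 0 g)

private lemma aux_part1 (k : Type*) [Field k] [CharZero k]
    (L : Type*) [LieRing L] [LieAlgebra k L] [Module.Finite k L]
    (b : Basis (Fin 3) k L)
    (hxy : ⁅b 0, b 1⁆ = b 1) (hxz : ⁅b 0, b 2⁆ = b 2) (hyz : ⁅b 1, b 2⁆ = 0) :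
    lieIndex k L = 1 := by
  have hmem : ∀ (ξ : Dual k L) (x : L), x ∈ lieStab k L ξ ↔ ∀ y, ξ ⁅x, y⁆ = 0 :=
    fun ξ x => Iff.rfl
  have hyx : ⁅b 1, b 0⁆ = -b 1 := by rw [← lie_skew, hxy]
  have hzx : ⁅b 2, b 0⁆ = -b 2 := by rw [← lie_skew, hxz]
  have hzy : ⁅b 2, b 1⁆ = 0 := by rw [← lie_skew, hyz, neg_zero]
  have hstab : ∀ (ξ : Dual k L) (v : L), ξ ⁅v, b 0⁆ = 0 → ξ ⁅v, b 1⁆ = 0 → ξ ⁅v, b 2⁆ = 0 →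
      v ∈ lieStab k L ξ := by
    intro ξ v h0 h1 h2
    rw [hmem]
    intro y
    have : ξ.comp (LieAlgebra.ad k L v) = 0 := by
      apply b.ext
      intro i
      fin_cases i <;> simpa [LieAlgebra.ad_apply]
    have := LinearMap.congr_fun this y
    simpa [LieAlgebra.ad_apply] using this
  -- lower bound: every stabilizer is nontrivial
  have hlb : ∀ ξ : Dual k L, 1 ≤ finrank k (lieStab k L ξ) := by
    intro ξ
    rw [Nat.one_le_iff_ne_zero, ← Nat.pos_iff_ne_zero, finrank_pos_iff]
    by_cases h12 : ξ (b 1) = 0 ∧ ξ (b 2) = 0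
    · refine nontrivial_of_ne ⟨b 1, ?_⟩ 0 ?_
      · apply hstab
        · rw [hyx, map_neg, h12.1, neg_zero]
        · rw [lie_self, map_zero]
        · rw [hyz, map_zero]
      · simp [Subtype.ext_iff, b.ne_zero 1]
    · set v : L := ξ (b 2) • b 1 - ξ (b 1) • b 2 with hv
      have hvne : v ≠ 0 := by
        intro hv0
        apply h12
        have h1 := congrArg (fun w => b.repr w 1) hv0
        have h2 := congrArg (fun w => b.repr w 2) hv0
        simp [hv, Finsupp.single_apply] at h1 h2
        exact ⟨h2, h1⟩
      refine nontrivial_of_ne ⟨v, ?_⟩ 0 ?_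
      · apply hstab
        · rw [hv]
          simp only [sub_lie, smul_lie, hyx, hzx, smul_neg, map_sub, map_neg, map_smul,
            smul_eq_mul]
          ring
        · rw [hv]
          simp [sub_lie, smul_lie, lie_self, hzy]
        · rw [hv]
          simp [sub_lie, smul_lie, lie_self, hyz]
      · simp [Subtype.ext_iff, hvne]
  -- upper bound: the stabilizer of b.coord 1 is the span of b 2
  have hcoord : ∀ j : Fin 3, b.coord 1 (b j) = if j = 1 then 1 else 0 := by
    intro j
    rw [Basis.coord_apply, Basis.repr_self, Finsupp.single_apply]
  have hspan : lieStab k L (b.coord 1) = Submodule.span k {b 2} := by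
    apply le_antisymm
    · intro x hx
      rw [hmem] at hx
      have hrep : x = b.repr x 0 • b 0 + b.repr x 1 • b 1 + b.repr x 2 • b 2 := by
        have := b.sum_repr x
        rw [Fin.sum_univ_three] at this
        exact this.symm
      have hc0 : b.repr x 0 = 0 := by
        have := hx (b 1)
        rw [hrep] at this
        simp [add_lie, smul_lie, lie_self, hxy, hzy, hcoord] at this
        exact this
      have hc1 : b.repr x 1 = 0 := by
        have := hx (b 0)
        rw [hrep] at this
        simp [add_lie, smul_lie, lie_self, hyx, hzx, hcoord] at this
        exact this
      rw [hrep, hc0, hc1]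
      simp only [zero_smul, zero_add, add_zero]
      exact Submodule.smul_mem _ _ (Submodule.mem_span_singleton_self _)
    · rw [Submodule.span_le, Set.singleton_subset_iff]
      apply hstab
      · rw [← lie_skew, hxz, map_neg, hcoord]; simp
      · rw [← lie_skew, hyz, neg_zero, map_zero]
      · rw [lie_self, map_zero]
  have hub : finrank k (lieStab k L (b.coord 1)) = 1 := by
    rw [hspan]
    exact finrank_span_singleton (b.ne_zero 2)
  apply le_antisymm
  · exact Nat.sInf_le ⟨b.coord 1, hub⟩
  · exact le_csInf ⟨1, b.coord 1, hub⟩ (by rintro n ⟨ξ, rfl⟩; exact hlb ξ)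


open MvPolynomial in
private lemma aux_part2 {k : Type*} [Field k] [CharZero k] (f : MvPolynomial (Fin 3) k)
    (hf : ∀ g : MvPolynomial (Fin 3) k, poissonBracket318 k f g = 0) :
    ∃ c : k, f = MvPolynomial.C c := by
  have h0 : X 0 * pderiv 0 f = 0 := by
    have := hf (X 1)
    simp only [poissonBracket318, pderiv_X_self, pderiv_X_of_ne (by decide : (1:Fin 3) ≠ 0),
      pderiv_X_of_ne (by decide : (1:Fin 3) ≠ 2), mul_one, mul_zero, sub_zero, zero_sub,
      zero_mul, sub_self] at this
    -- this : X 1 * pderiv 0 f + X 2 * 0 = 0 or similar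
    have h2 : X 1 * (X 0 * pderiv 0 f) = 0 := by
      have := congrArg (fun p => X 0 * p) this
      simp only [mul_zero] at this
      rw [← this]; ring
    rcases mul_eq_zero.mp h2 with h | h
    · exact absurd h (X_ne_zero 1)
    · exact h
  have h1 : X 1 * pderiv 1 f + X 2 * pderiv 2 f = 0 := by
    have := hf (X 0)
    simp only [poissonBracket318, pderiv_X_self, pderiv_X_of_ne (by decide : (0:Fin 3) ≠ 1),
      pderiv_X_of_ne (by decide : (0:Fin 3) ≠ 2), mul_one, mul_zero, zero_sub, mul_neg] at this
    linear_combination -this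
  refine ⟨coeff 0 f, MvPolynomial.ext _ _ fun m => ?_⟩
  rw [coeff_C]
  rcases eq_or_ne (0 : Fin 3 →₀ ℕ) m with rfl | hm
  · simp
  · rw [if_neg hm]
    have hc0 : (m 0 : k) * coeff m f = 0 := by
      rw [← coeff_X_mul_pderiv, h0, coeff_zero]
    have hc12 : ((m 1 : k) + (m 2 : k)) * coeff m f = 0 := by
      have := congrArg (coeff m) h1
      rw [coeff_add, coeff_X_mul_pderiv, coeff_X_mul_pderiv, coeff_zero] at this
      rw [add_mul]; exact this
    have hmne : m 0 ≠ 0 ∨ m 1 + m 2 ≠ 0 := by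
      by_contra h
      push_neg at h
      obtain ⟨ha, hb⟩ := h
      apply hm
      ext j
      fin_cases j <;> simp [Fin.isValue] <;> omega
    rcases hmne with h | h
    · rcases mul_eq_zero.mp hc0 with h' | h'
      · exact absurd (Nat.cast_eq_zero.mp h') h
      · exact h'
    · rcases mul_eq_zero.mp hc12 with h' | h'
      · exact absurd (by exact_mod_cast h' : (((m 1 + m 2 : ℕ)) : k) = 0) (by exact_mod_cast h)
      · exact h'


/-- for the 3-dimensional Lie algebra with `[x,y] = y`, `[x,z] = z`,
the index is 1 and the Poisson center `Y(L)` of `S(L) = k[x,y,z]` consists of the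
scalars only. -/
theorem example36_index_and_poisson_center (k : Type*) [Field k] [CharZero k]
    (L : Type*) [LieRing L] [LieAlgebra k L] [Module.Finite k L]
    (b : Basis (Fin 3) k L)
    (hxy : ⁅b 0, b 1⁆ = b 1) (hxz : ⁅b 0, b 2⁆ = b 2) (hyz : ⁅b 1, b 2⁆ = 0) :
    lieIndex k L = 1 ∧
    ∀ f : MvPolynomial (Fin 3) k,
      (∀ g : MvPolynomial (Fin 3) k, poissonBracket318 k f g = 0) →
      ∃ c : k, f = MvPolynomial.C c := by
  exact ⟨aux_part1 k L b hxy hxz hyz, fun f hf => aux_part2 f hf⟩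
end

section
/- Let Q_n (n = 2q even) be the filiform Lie algebra with basis x₁,…,x_n and nonzero brackets [x₁, x_i] = x_{i+1} for i = 2,…,n−2, and [x_j, x_{n−j+1}] = (−1)^{j+1} x_n for j = 2,…,q. Then the functional ξ = x_n* is regular with stabilizer L(ξ) = span(x₁, x_n), so i(Q_n) = 2 and c(Q_n) = q + 1; moreover H = span(x_{q+1},…,x_n) is an abelian ideal of dimension q = c(Q_n) − 1. -/
open Module

lemma aux_two_le {k L : Type*} [Field k] [AddCommGroup L] [Module k L] [Module.Finite k L]
    {S : Submodule k L} {u v : L} (hu : u ∈ S) (hv : v ∈ S)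
    (f g : Module.Dual k L) (hfu : f u = 1) (hfv : f v = 0) (hgv : g v = 1) :
    2 ≤ finrank k S := by
  have li : LinearIndependent k ![(⟨u, hu⟩ : S), ⟨v, hv⟩] := by
    rw [LinearIndependent.pair_iff]
    intro s t hst
    have h0 : s • u + t • v = 0 := by
      have := congrArg S.subtype hst
      simpa using this
    have hs : s = 0 := by
      have := congrArg f h0
      simpa [hfu, hfv] using this
    have ht : t = 0 := by
      have := congrArg g h0
      rw [map_add, map_smul, map_smul, hgv, hs] at this
      simpa using this
    exact ⟨hs, ht⟩
  simpa using li.fintype_card_le_finrank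

lemma aux_span_pair {k L : Type*} [Field k] [AddCommGroup L] [Module k L] [Module.Finite k L]
    {u v : L} (f g : Module.Dual k L) (hfu : f u = 1) (hfv : f v = 0) (hgv : g v = 1) :
    finrank k (Submodule.span k {u, v}) = 2 := by
  refine le_antisymm ?_ (aux_two_le (Submodule.subset_span (by simp))
    (Submodule.subset_span (by simp)) f g hfu hfv hgv)
  classical
  refine (finrank_span_le_card _).trans ?_
  have : ({u, v} : Set L).toFinset ⊆ {u, v} := by
    intro a ha
    simp at ha
    simpa using ha
  calc ({u, v} : Set L).toFinset.card ≤ ({u, v} : Finset L).card := Finset.card_le_card this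
    _ ≤ 2 := Finset.card_insert_le _ _ |>.trans (by simp)

lemma sum_lie' {k : Type*} [CommRing k] {L : Type*} [LieRing L] [LieAlgebra k L]
    {ι : Type*} (s : Finset ι) (f : ι → L) (z : L) :
    ⁅∑ i ∈ s, f i, z⁆ = ∑ i ∈ s, ⁅f i, z⁆ := by
  induction s using Finset.cons_induction with
  | empty => simp
  | cons a s h ih => rw [Finset.sum_cons, Finset.sum_cons, add_lie, ih]

lemma lie_sum' {k : Type*} [CommRing k] {L : Type*} [LieRing L] [LieAlgebra k L]
    {ι : Type*} (s : Finset ι) (f : ι → L) (z : L) :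
    ⁅z, ∑ i ∈ s, f i⁆ = ∑ i ∈ s, ⁅z, f i⁆ := by
  induction s using Finset.cons_induction with
  | empty => simp
  | cons a s h ih => rw [Finset.sum_cons, Finset.sum_cons, lie_add, ih]

/-- for the filiform Lie algebra `Q_n` (`n = 2q`), the functional
`ξ = x_n*` is regular with stabilizer `span(x₁, x_n)`, so `i(Q_n) = 2` and
`c(Q_n) = q + 1`; moreover `H = span(x_{q+1},…,x_n)` (0-indexed: the `x l` with `l ≥ q`)
is an abelian ideal of dimension `q = c(Q_n) - 1`.  (Indexing is 0-based: `x i` here is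
the paper's `x_{i+1}`.) -/
theorem Qn_index_and_abelian_ideal (k : Type*) [Field k] [CharZero k]
    (L : Type*) [LieRing L] [LieAlgebra k L] [Module.Finite k L]
    (q n : ℕ) (hq2 : 2 ≤ q) (hn : n = 2 * q)
    (b : Basis (Fin n) k L) (x : ℕ → L)
    (hx : ∀ i (h : i < n), x i = b ⟨i, h⟩) (hx0 : ∀ i, n ≤ i → x i = 0)
    (h1 : ∀ i, 1 ≤ i → i ≤ n - 3 → ⁅x 0, x i⁆ = x (i + 1))
    (h2 : ⁅x 0, x (n - 2)⁆ = 0) (h3 : ⁅x 0, x (n - 1)⁆ = 0)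
    (h4 : ∀ a, 1 ≤ a → a ≤ q - 1 → ⁅x a, x (n - 1 - a)⁆ = ((-1 : k) ^ a) • x (n - 1))
    (h5 : ∀ i j, 1 ≤ i → 1 ≤ j → i + j ≠ n - 1 → ⁅x i, x j⁆ = 0)
    (ξ : Module.Dual k L) (hξ : ξ = b.coord ⟨n - 1, by omega⟩)
    (H : Submodule k L) (hH : H = Submodule.span k {v | ∃ l, q ≤ l ∧ v = x l}) :
    lieStab k L ξ = Submodule.span k {x 0, x (n - 1)} ∧
    lieIndex k L = 2 ∧ magic k L = q + 1 ∧
    (∀ a ∈ H, ∀ c ∈ H, ⁅a, c⁆ = 0) ∧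
    (∀ y : L, ∀ a ∈ H, ⁅y, a⁆ ∈ H) ∧
    finrank k H = q ∧ q = magic k L - 1 := by
  have hn4 : 4 ≤ n := by omega
  have hbx : ∀ i : Fin n, b i = x i.val := fun i => by rw [hx i.val i.isLt]
  have hco : ∀ (i : Fin n) (j : ℕ), j < n → b.coord i (x j) = if j = i.val then 1 else 0 := by
    intro i j hj
    rw [hx j hj, Basis.coord_apply, Basis.repr_self, Finsupp.single_apply]
    simp [Fin.ext_iff]
  have hξx : ∀ j, j < n → ξ (x j) = if j = n - 1 then 1 else 0 := by
    intro j hj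
    rw [hξ, hco _ j hj]
  have central : ∀ y : L, ⁅y, x (n - 1)⁆ = 0 := by
    intro y
    conv_lhs => rw [← b.sum_repr y]
    rw [sum_lie' (k := k)]
    apply Finset.sum_eq_zero
    intro i _
    rw [smul_lie, hbx i]
    rcases Nat.eq_zero_or_pos i.val with h0 | h0
    · rw [h0, h3, smul_zero]
    · rw [h5 i.val (n - 1) h0 (by omega) (by omega), smul_zero]
  have F1 : ∀ a j, 1 ≤ a → 1 ≤ j → a + j = n - 1 → ⁅x a, x j⁆ = ((-1 : k) ^ a) • x (n - 1) := by
    intro a j ha hj haj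
    have hodd : Odd (a + j) := by rw [haj]; exact ⟨q - 1, by omega⟩
    rcases le_or_gt a (q - 1) with h | h
    · have hja : j = n - 1 - a := by omega
      rw [hja]; exact h4 a ha h
    · have hj' : j ≤ q - 1 := by omega
      have hb4 : ⁅x j, x a⁆ = ((-1 : k) ^ j) • x (n - 1) := by
        have e : n - 1 - j = a := by omega
        rw [← e]; exact h4 j hj hj'
      rw [← lie_skew, hb4, ← neg_smul]
      congr 1
      have he : ((-1 : k)) ^ j * (-1) ^ j = 1 := by
        rw [← pow_add]; exact Even.neg_one_pow ⟨j, by ring⟩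
      have ho : ((-1 : k)) ^ a * (-1) ^ j = -1 := by
        rw [← pow_add, haj]; exact Odd.neg_one_pow ⟨q - 1, by omega⟩
      linear_combination ((-1 : k) ^ a) * he - ((-1 : k) ^ j) * ho
  have hsign : ∀ a, a ≤ n - 1 → ((-1 : k)) ^ (n - 1 - a) = -(-1) ^ a := by
    intro a ha
    have he : ((-1 : k)) ^ a * (-1) ^ a = 1 := by
      rw [← pow_add]; exact Even.neg_one_pow ⟨a, by ring⟩
    have ho : ((-1 : k)) ^ (n - 1 - a) * (-1) ^ a = -1 := by
      rw [← pow_add]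
      have e : n - 1 - a + a = n - 1 := by omega
      rw [e]; exact Odd.neg_one_pow ⟨q - 1, by omega⟩
    linear_combination (-((-1 : k) ^ (n - 1 - a))) * he + ((-1 : k) ^ a) * ho
  have hzxn : ∀ (ξ' : Module.Dual k L) (y : L), ξ' ⁅x (n - 1), y⁆ = 0 := by
    intro ξ' y
    rw [← lie_skew, central, neg_zero, map_zero]
  have expand : ∀ (ξ' : Module.Dual k L) (w : L), (∀ j, j < n → ξ' ⁅w, x j⁆ = 0) →
      ∀ z, ξ' ⁅w, z⁆ = 0 := by
    intro ξ' w hw z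
    conv_lhs => rw [← b.sum_repr z]
    rw [lie_sum' (k := k), map_sum]
    apply Finset.sum_eq_zero
    intro i _
    rw [lie_smul, map_smul, hbx i, hw i.val i.isLt, smul_zero]
  have memStab : ∀ (ξ' : Module.Dual k L) (w : L),
      w ∈ lieStab k L ξ' ↔ ∀ z, ξ' ⁅w, z⁆ = 0 := fun _ _ => Iff.rfl
  have hexp : ∀ (ξ' : Module.Dual k L) (y z : L),
      ξ' ⁅y, z⁆ = ∑ i : Fin n, b.repr y i * ξ' ⁅x i.val, z⁆ := by
    intro ξ' y z
    conv_lhs => rw [← b.sum_repr y]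
    rw [sum_lie' (k := k), map_sum]
    refine Finset.sum_congr rfl fun i _ => ?_
    rw [smul_lie, map_smul, hbx i, smul_eq_mul]
  -- Part 1 : the stabilizer of ξ
  have hstab : lieStab k L ξ = Submodule.span k {x 0, x (n - 1)} := by
    apply le_antisymm
    · intro y hy
      have hy' : ∀ z, ξ ⁅y, z⁆ = 0 := hy
      have hrep : ∀ a (_ : 1 ≤ a) (_ : a ≤ n - 2), b.repr y ⟨a, by omega⟩ = 0 := by
        intro a ha1 ha2
        have h0 : ξ ⁅y, x (n - 1 - a)⁆ = 0 := hy' _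
        rw [hexp ξ y (x (n - 1 - a))] at h0
        have hone : ∀ i : Fin n, i ∈ Finset.univ → i ≠ ⟨a, by omega⟩ →
            b.repr y i * ξ ⁅x i.val, x (n - 1 - a)⁆ = 0 := by
          intro i _ hi
          have hne : i.val ≠ a := fun h => hi (Fin.ext h)
          rcases Nat.eq_zero_or_pos i.val with h0i | h0i
          · by_cases ha : a = 1
            · have e : n - 1 - a = n - 2 := by omega
              rw [h0i, e, h2, map_zero, mul_zero]
            · rw [h0i, h1 (n - 1 - a) (by omega) (by omega), hξx (n - 1 - a + 1) (by omega),
                if_neg (by omega), mul_zero]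
          · rw [h5 i.val (n - 1 - a) h0i (by omega) (by omega), map_zero, mul_zero]
        rw [Finset.sum_eq_single_of_mem (⟨a, by omega⟩ : Fin n) (Finset.mem_univ _) hone] at h0
        rw [F1 a (n - 1 - a) ha1 (by omega) (by omega)] at h0
        · rw [map_smul, hξx (n - 1) (by omega), if_pos rfl, smul_eq_mul, mul_one] at h0
          exact (mul_eq_zero.mp h0).resolve_right (pow_ne_zero _ (by norm_num))
      have hmem : (∑ i : Fin n, b.repr y i • b i) ∈ Submodule.span k {x 0, x (n - 1)} := by
        refine Submodule.sum_mem _ fun i _ => ?_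
        rcases Nat.eq_zero_or_pos i.val with h0i | h0i
        · refine Submodule.smul_mem _ _ (Submodule.subset_span ?_)
          rw [hbx i, h0i]; exact Set.mem_insert _ _
        rcases eq_or_ne i.val (n - 1) with h1i | h1i
        · refine Submodule.smul_mem _ _ (Submodule.subset_span ?_)
          rw [hbx i, h1i]; exact Set.mem_insert_iff.mpr (Or.inr rfl)
        · have hz := hrep i.val (by omega) (by omega)
          rw [show (⟨i.val, by omega⟩ : Fin n) = i from Fin.ext rfl] at hz
          rw [hz, zero_smul]
          exact Submodule.zero_mem _
      rwa [b.sum_repr] at hmem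
    · rw [Submodule.span_le]
      rintro v hv
      simp only [Set.mem_insert_iff, Set.mem_singleton_iff] at hv
      rcases hv with rfl | rfl
      · refine (memStab ξ (x 0)).mpr (expand ξ (x 0) ?_)
        intro j hj
        rcases eq_or_ne j 0 with rfl | hj0
        · rw [lie_self, map_zero]
        rcases eq_or_ne j (n - 1) with rfl | hj1
        · rw [h3, map_zero]
        rcases eq_or_ne j (n - 2) with rfl | hj2
        · rw [h2, map_zero]
        · rw [h1 j (by omega) (by omega), hξx (j + 1) (by omega), if_neg (by omega)]
      · exact (memStab ξ _).mpr (fun z => hzxn ξ z)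
  -- finrank of the stabilizer of ξ
  have hfr2 : finrank k (lieStab k L ξ) = 2 := by
    rw [hstab]
    refine aux_span_pair (b.coord ⟨0, by omega⟩) (b.coord ⟨n - 1, by omega⟩) ?_ ?_ ?_
    · rw [hco _ 0 (by omega)]; simp
    · rw [hco _ (n - 1) (by omega)]
      simp only [Fin.val_mk]
      rw [if_neg (by omega)]
    · rw [hco _ (n - 1) (by omega)]; simp
  -- the index
  have hidx : lieIndex k L = 2 := by
    refine le_antisymm (Nat.sInf_le ⟨ξ, hfr2⟩) (le_csInf ⟨2, ξ, hfr2⟩ ?_)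
    rintro m ⟨ξ', rfl⟩
    by_cases hc : ξ' (x (n - 1)) = 0
    · have hu : x (n - 2) ∈ lieStab k L ξ' := by
        refine (memStab _ _).mpr (expand _ _ ?_)
        intro j hj
        rcases eq_or_ne j 0 with rfl | hj0
        · rw [← lie_skew, h2, neg_zero, map_zero]
        rcases eq_or_ne j 1 with rfl | hj1
        · rw [F1 (n - 2) 1 (by omega) (by omega) (by omega), map_smul, hc, smul_zero]
        · rw [h5 (n - 2) j (by omega) (by omega) (by omega), map_zero]
      have hv : x (n - 1) ∈ lieStab k L ξ' := (memStab _ _).mpr (fun z => hzxn ξ' z)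
      refine aux_two_le hu hv (b.coord ⟨n - 2, by omega⟩) (b.coord ⟨n - 1, by omega⟩) ?_ ?_ ?_
      · rw [hco _ (n - 2) (by omega)]; simp
      · rw [hco _ (n - 1) (by omega)]
        simp only [Fin.val_mk]
        rw [if_neg (by omega)]
      · rw [hco _ (n - 1) (by omega)]; simp
    · set w := x 0 + ∑ a ∈ Finset.Icc 2 (n - 2),
        (-(-1 : k) ^ a * ξ' (x (n - a)) / ξ' (x (n - 1))) • x a with hw
      have hbr : ∀ j, j < n → ξ' ⁅w, x j⁆ = ξ' ⁅x 0, x j⁆ + ∑ a ∈ Finset.Icc 2 (n - 2),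
          (-(-1 : k) ^ a * ξ' (x (n - a)) / ξ' (x (n - 1))) * ξ' ⁅x a, x j⁆ := by
        intro j hj
        rw [hw, add_lie, sum_lie' (k := k), map_add, map_sum]
        congr 1
        refine Finset.sum_congr rfl fun a _ => ?_
        rw [smul_lie, map_smul, smul_eq_mul]
      have key : ∀ j, j < n → ξ' ⁅w, x j⁆ = 0 := by
        intro j hj
        rcases eq_or_ne j (n - 1) with rfl | hj1
        · rw [central, map_zero]
        rw [hbr j hj]
        rcases eq_or_ne j 0 with rfl | hj0
        · rw [lie_self, map_zero, zero_add]
          have hxn2 : ξ' ⁅x (n - 2), x 0⁆ = 0 := by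
            rw [← lie_skew, h2, neg_zero, map_zero]
          refine Finset.sum_involution (fun a _ => if a = n - 2 then n - 2 else n - 1 - a)
            ?_ ?_ ?_ ?_
          · intro a ha
            rw [Finset.mem_Icc] at ha
            by_cases han : a = n - 2
            · subst han
              simp [hxn2]
            · simp only [if_neg han]
              have hba : ξ' ⁅x a, x 0⁆ = -ξ' (x (a + 1)) := by
                rw [← lie_skew, h1 a (by omega) (by omega), map_neg]
              have hbb : ξ' ⁅x (n - 1 - a), x 0⁆ = -ξ' (x (n - 1 - a + 1)) := by
                rw [← lie_skew, h1 (n - 1 - a) (by omega) (by omega), map_neg]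
              have e1 : n - (n - 1 - a) = a + 1 := by omega
              have e2 : n - 1 - a + 1 = n - a := by omega
              rw [hba, hbb, e1, e2, hsign a (by omega)]
              ring
          · intro a ha hfa
            rw [Finset.mem_Icc] at ha
            by_cases han : a = n - 2
            · exact absurd (by rw [han, hxn2, mul_zero]) hfa
            · simp only [if_neg han]
              omega
          · intro a ha
            rw [Finset.mem_Icc] at ha
            rw [Finset.mem_Icc]
            by_cases han : a = n - 2
            · simp only [if_pos han]; omega
            · simp only [if_neg han]; omega
          · intro a ha
            rw [Finset.mem_Icc] at ha
            by_cases han : a = n - 2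
            · simp [han]
            · simp only [if_neg han]
              rw [if_neg (by omega)]
              omega
        rcases eq_or_ne j (n - 2) with rfl | hj2
        · rw [h2, map_zero, zero_add]
          refine Finset.sum_eq_zero fun a ha => ?_
          rw [Finset.mem_Icc] at ha
          rw [h5 a (n - 2) (by omega) (by omega) (by omega), map_zero, mul_zero]
        · rw [h1 j (by omega) (by omega)]
          rw [Finset.sum_eq_single_of_mem (n - 1 - j) (by rw [Finset.mem_Icc]; omega) ?side]
          case side =>
            intro a ha hne
            rw [Finset.mem_Icc] at ha
            rw [h5 a j (by omega) (by omega) (by omega), map_zero, mul_zero]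
          rw [F1 (n - 1 - j) j (by omega) (by omega) (by omega), map_smul, smul_eq_mul]
          have e1 : n - (n - 1 - j) = j + 1 := by omega
          rw [e1]
          have hs : ((-1 : k)) ^ ((n - 1 - j) * 2) = 1 := Even.neg_one_pow ⟨n - 1 - j, by ring⟩
          field_simp
          linear_combination (-ξ' (x (j + 1))) * hs
      have hu : w ∈ lieStab k L ξ' := (memStab _ _).mpr (expand _ _ key)
      have hv : x (n - 1) ∈ lieStab k L ξ' := (memStab _ _).mpr (fun z => hzxn ξ' z)
      refine aux_two_le hu hv (b.coord ⟨0, by omega⟩) (b.coord ⟨n - 1, by omega⟩) ?_ ?_ ?_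
      · rw [hw, map_add, map_sum]
        have hz : ∀ a ∈ Finset.Icc 2 (n - 2),
            (b.coord (⟨0, by omega⟩ : Fin n))
              ((-(-1 : k) ^ a * ξ' (x (n - a)) / ξ' (x (n - 1))) • x a) = 0 := by
          intro a ha
          rw [Finset.mem_Icc] at ha
          rw [map_smul, hco _ a (by omega)]
          simp only [Fin.val_mk]
          rw [if_neg (by omega), smul_zero]
        rw [Finset.sum_eq_zero hz, add_zero, hco _ 0 (by omega)]
        simp
      · rw [hco _ (n - 1) (by omega)]
        simp only [Fin.val_mk]
        rw [if_neg (by omega)]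
      · rw [hco _ (n - 1) (by omega)]; simp
  have hdim : finrank k L = n := by rw [finrank_eq_card_basis b, Fintype.card_fin]
  have hmagic : magic k L = q + 1 := by
    unfold magic; rw [hdim, hidx]; omega
  -- H
  have hgen : ∀ l, q ≤ l → x l ∈ H := by
    intro l hl
    rw [hH]
    exact Submodule.subset_span ⟨l, hl, rfl⟩
  have inner : ∀ l, q ≤ l → ∀ c ∈ H, ⁅x l, c⁆ = 0 := by
    intro l hl c hc
    rw [hH] at hc
    induction hc using Submodule.span_induction with
    | mem v hv =>
      obtain ⟨m, hm, rfl⟩ := hv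
      rcases le_or_gt n l with h | h
      · rw [hx0 l h, zero_lie]
      rcases le_or_gt n m with h' | h'
      · rw [hx0 m h', lie_zero]
      · exact h5 l m (by omega) (by omega) (by omega)
    | zero => rw [lie_zero]
    | add u v _ _ hu hv => rw [lie_add, hu, hv, add_zero]
    | smul t u _ hu => rw [lie_smul, hu, smul_zero]
  have habel : ∀ a ∈ H, ∀ c ∈ H, ⁅a, c⁆ = 0 := by
    intro a ha c hc
    rw [hH] at ha
    induction ha using Submodule.span_induction with
    | mem v hv =>
      obtain ⟨l, hl, rfl⟩ := hv
      exact inner l hl c hc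
    | zero => rw [zero_lie]
    | add u v _ _ hu hv => rw [add_lie, hu, hv, add_zero]
    | smul t u _ hu => rw [smul_lie, hu, smul_zero]
  have hideal : ∀ y : L, ∀ a ∈ H, ⁅y, a⁆ ∈ H := by
    have base : ∀ (i : Fin n), ∀ l, q ≤ l → ⁅x i.val, x l⁆ ∈ H := by
      intro i l hl
      rcases le_or_gt n l with hln | hln
      · rw [hx0 l hln, lie_zero]; exact H.zero_mem
      rcases eq_or_ne i.val 0 with h0 | h0
      · rw [h0]
        rcases eq_or_ne l (n - 1) with rfl | hl1
        · rw [h3]; exact H.zero_mem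
        rcases eq_or_ne l (n - 2) with rfl | hl2
        · rw [h2]; exact H.zero_mem
        · rw [h1 l (by omega) (by omega)]
          exact hgen (l + 1) (by omega)
      · rcases eq_or_ne (i.val + l) (n - 1) with hsum | hsum
        · rw [F1 i.val l (by omega) (by omega) hsum]
          exact H.smul_mem _ (hgen (n - 1) (by omega))
        · rw [h5 i.val l (by omega) (by omega) hsum]; exact H.zero_mem
    have step : ∀ (y : L), ∀ l, q ≤ l → ⁅y, x l⁆ ∈ H := by
      intro y l hl
      have h' : ⁅∑ i : Fin n, b.repr y i • b i, x l⁆ ∈ H := by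
        rw [sum_lie' (k := k)]
        refine Submodule.sum_mem _ fun i _ => ?_
        rw [smul_lie, hbx i]
        exact H.smul_mem _ (base i l hl)
      rwa [b.sum_repr] at h'
    intro y a ha
    rw [hH] at ha
    induction ha using Submodule.span_induction with
    | mem v hv =>
      obtain ⟨l, hl, rfl⟩ := hv
      exact step y l hl
    | zero => rw [lie_zero]; exact H.zero_mem
    | add u v _ _ hu hv => rw [lie_add]; exact H.add_mem hu hv
    | smul t u _ hu => rw [lie_smul]; exact H.smul_mem t hu
  have hli : LinearIndependent k fun i : Fin q => b ⟨q + i.val, by omega⟩ := by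
    have he : (fun i : Fin q => b ⟨q + i.val, by omega⟩) =
        b ∘ (fun i : Fin q => (⟨q + i.val, by omega⟩ : Fin n)) := rfl
    rw [he]
    refine b.linearIndependent.comp _ fun i j hij => ?_
    have := congrArg Fin.val hij
    simp only [Fin.val_mk] at this
    exact Fin.ext (by omega)
  have hHspan : H = Submodule.span k (Set.range fun i : Fin q => b ⟨q + i.val, by omega⟩) := by
    rw [hH]
    apply le_antisymm
    · rw [Submodule.span_le]
      rintro v ⟨l, hl, rfl⟩
      rcases le_or_gt n l with h | h
      · rw [hx0 l h]; exact Submodule.zero_mem _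
      · apply Submodule.subset_span
        refine ⟨⟨l - q, by omega⟩, ?_⟩
        show b ⟨q + (l - q), by omega⟩ = x l
        rw [hx l h]
        congr 1
        apply Fin.ext
        show q + (l - q) = l
        omega
    · rw [Submodule.span_le]
      rintro v ⟨i, rfl⟩
      exact Submodule.subset_span ⟨q + i.val, by omega, by rw [hx (q + i.val) (by omega)]⟩
  have hfrH : finrank k H = q := by
    rw [hHspan, finrank_span_eq_card hli, Fintype.card_fin]
  exact ⟨hstab, hidx, hmagic, habel, hideal, hfrH, by rw [hmagic]; omega⟩
end
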